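/- arXiv:2504.09638 — 5 statements merged into one kernel-verified Lean document; each statement's English description precedes it below -/
import Mathlib

section
/- Conditional decomposition of the ℓ¹ Wasserstein transport cost to a finitely supported distribution: for every Borel probability measure P on ℝ^m, the infimum over all couplings Π of P and P^e of ∫ ‖ξ − ζ‖₁ dΠ(ξ,ζ) equals the infimum, over all S-tuples (P_1,…,P_S) of Borel probability measures on ℝ^m satisfying Σ_{s=1}^S π_s P_s = P, of Σ_{s=1}^S π_s ∫ ‖ξ − ξ^e_s‖₁ dP_s(ξ), where both infima are taken in [0,∞]. -/
open MeasureTheory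

private lemma map_finsum_measure {α β ι : Type*} [MeasurableSpace α] [MeasurableSpace β]
    (t : Finset ι) (μ : ι → Measure α) {f : α → β} (hf : Measurable f) :
    (∑ i ∈ t, μ i).map f = ∑ i ∈ t, (μ i).map f := by
  classical
  induction t using Finset.induction_on with
  | empty => simp
  | insert _ _ h ih =>
    rw [Finset.sum_insert h, Finset.sum_insert h, Measure.map_add _ _ hf, ih]

private lemma gMeas {m : ℕ} (v : Fin m → ℝ) :
    Measurable (fun ξ : Fin m → ℝ => ENNReal.ofReal (∑ i, |ξ i - v i|)) := by
  refine ENNReal.measurable_ofReal.comp ?_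
  exact Finset.measurable_sum _ fun i _ => ((measurable_pi_apply i).sub measurable_const).abs

private lemma costMeas {m : ℕ} :
    Measurable (fun p : (Fin m → ℝ) × (Fin m → ℝ) =>
      ENNReal.ofReal (∑ i, |p.1 i - p.2 i|)) := by
  refine ENNReal.measurable_ofReal.comp ?_
  refine Finset.measurable_sum _ fun i _ => ?_
  exact (((measurable_pi_apply i).comp measurable_fst).sub
    ((measurable_pi_apply i).comp measurable_snd)).abs

private lemma fiber_sum {S : ℕ} {M : Type*} [AddCommMonoid M] [Module ENNReal M]
    (k : Fin S → Fin S) (hk : ∀ s, k (k s) = k s)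
    (a : Fin S → ENNReal) (c : Fin S → ENNReal) (R : Fin S → M)
    (hc : ∀ s, c (k s) = c s) (hR : ∀ s, R (k s) = R s)
    (hfib : ∀ t, k t = t → ∑ s ∈ Finset.univ.filter (fun s => k s = t), a s = c t) :
    ∑ s, (a s * (c s)⁻¹) • R s = ∑ t, (if k t = t then (c t * (c t)⁻¹) • R t else 0) := by
  classical
  rw [← Finset.sum_fiberwise Finset.univ k (fun s => (a s * (c s)⁻¹) • R s)]
  refine Finset.sum_congr rfl fun t _ => ?_
  by_cases ht : k t = t
  · rw [if_pos ht]
    have hcongr : ∀ s ∈ Finset.univ.filter (fun s => k s = t),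
        (a s * (c s)⁻¹) • R s = a s • ((c t)⁻¹ • R t) := by
      intro s hs
      have hst : k s = t := (Finset.mem_filter.mp hs).2
      rw [← hst, ← hc s, ← hR s, hst, mul_smul]
    rw [Finset.sum_congr rfl hcongr, ← Finset.sum_smul, hfib t ht, smul_smul]
  · rw [if_neg ht]
    apply Finset.sum_eq_zero
    intro s hs
    exfalso
    apply ht
    have h2 : k s = t := (Finset.mem_filter.mp hs).2
    rw [← h2]
    exact hk s

/-- Conditional decomposition of the ℓ¹ Wasserstein transport cost to the finitely
supported empirical distribution `P^e = ∑ s, π s • δ_{ξ^e s}`: the infimal coupling cost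
equals the infimum over all decompositions `P = ∑ s, π s • P_s` of
`∑ s, π s ∫ ‖ξ − ξ^e_s‖₁ dP_s(ξ)`, both infima taken in `[0,∞]`. -/
theorem stmt7 {m S : ℕ} (ξe : Fin S → Fin m → ℝ)
    (π : Fin S → ℝ) (hπ : ∀ s, 0 ≤ π s) (hπ1 : ∑ s, π s = 1)
    (P : Measure (Fin m → ℝ)) (hP : IsProbabilityMeasure P) :
    (⨅ (Plan : Measure ((Fin m → ℝ) × (Fin m → ℝ)))
        (_ : IsProbabilityMeasure Plan) (_ : Plan.map Prod.fst = P)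
        (_ : Plan.map Prod.snd =
          ∑ s, ENNReal.ofReal (π s) • Measure.dirac (ξe s)),
        ∫⁻ p, ENNReal.ofReal (∑ i, |p.1 i - p.2 i|) ∂Plan) =
      ⨅ (Ps : Fin S → Measure (Fin m → ℝ))
        (_ : ∀ s, IsProbabilityMeasure (Ps s))
        (_ : (∑ s, ENNReal.ofReal (π s) • Ps s) = P),
        ∑ s, ENNReal.ofReal (π s) *
          ∫⁻ ξ, ENNReal.ofReal (∑ i, |ξ i - ξe s i|) ∂(Ps s) := by
  classical
  refine le_antisymm ?_ ?_
  · -- LHS ≤ RHS: from a decomposition build a coupling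
    refine le_iInf fun Ps => le_iInf fun hprob => le_iInf fun hsum => ?_
    have hemb : ∀ s, Measurable (fun ξ : Fin m → ℝ => (ξ, ξe s)) :=
      fun s => measurable_id.prodMk measurable_const
    set Plan : Measure ((Fin m → ℝ) × (Fin m → ℝ)) :=
      ∑ s, ENNReal.ofReal (π s) • (Ps s).map (fun ξ => (ξ, ξe s)) with hPlan
    have hfst : Plan.map Prod.fst = P := by
      rw [hPlan, map_finsum_measure _ _ measurable_fst, ← hsum]
      refine Finset.sum_congr rfl fun s _ => ?_
      rw [Measure.map_smul, Measure.map_map measurable_fst (hemb s)]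
      have : (Prod.fst ∘ fun ξ : Fin m → ℝ => (ξ, ξe s)) = id := rfl
      rw [this, Measure.map_id]
    have hsnd : Plan.map Prod.snd = ∑ s, ENNReal.ofReal (π s) • Measure.dirac (ξe s) := by
      rw [hPlan, map_finsum_measure _ _ measurable_snd]
      refine Finset.sum_congr rfl fun s _ => ?_
      rw [Measure.map_smul, Measure.map_map measurable_snd (hemb s)]
      have : (Prod.snd ∘ fun ξ : Fin m → ℝ => (ξ, ξe s)) = fun _ => ξe s := rfl
      rw [this, Measure.map_const, measure_univ, one_smul]
    have hprobPlan : IsProbabilityMeasure Plan := by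
      constructor
      rw [hPlan, Measure.finset_sum_apply]
      have : ∀ s, (ENNReal.ofReal (π s) • (Ps s).map (fun ξ => (ξ, ξe s))) Set.univ
          = ENNReal.ofReal (π s) := by
        intro s
        have : IsProbabilityMeasure ((Ps s).map (fun ξ => (ξ, ξe s))) :=
          Measure.isProbabilityMeasure_map (hemb s).aemeasurable
        rw [Measure.smul_apply, measure_univ, smul_eq_mul, mul_one]
      rw [Finset.sum_congr rfl fun s _ => this s, ← ENNReal.ofReal_sum_of_nonneg
        (fun s _ => hπ s), hπ1, ENNReal.ofReal_one]
    refine iInf_le_of_le Plan (iInf_le_of_le hprobPlan (iInf_le_of_le hfst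
      (iInf_le_of_le hsnd (le_of_eq ?_))))
    rw [hPlan, lintegral_finset_sum_measure]
    refine Finset.sum_congr rfl fun s _ => ?_
    rw [lintegral_smul_measure, lintegral_map costMeas (hemb s), smul_eq_mul]
  · -- RHS ≤ LHS: from a coupling build a decomposition
    refine le_iInf fun Plan => le_iInf fun hprobPlan => le_iInf fun hfst =>
      le_iInf fun hsnd => ?_
    -- the atom preimages
    set E : Fin S → Set ((Fin m → ℝ) × (Fin m → ℝ)) :=
      fun s => Prod.snd ⁻¹' {ξe s} with hE_def
    have hE : ∀ s, MeasurableSet (E s) :=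
      fun s => measurable_snd (measurableSet_singleton _)
    set c : Fin S → ENNReal := fun s => Plan (E s) with hc_def
    have hc_eq : ∀ s, c s = ∑ t ∈ Finset.univ.filter (fun t => ξe t = ξe s),
        ENNReal.ofReal (π t) := by
      intro s
      have h1 : c s = Plan.map Prod.snd {ξe s} := by
        rw [Measure.map_apply measurable_snd (measurableSet_singleton _)]
      rw [h1, hsnd, Measure.finset_sum_apply]
      rw [Finset.sum_filter]
      refine Finset.sum_congr rfl fun t _ => ?_
      rw [Measure.smul_apply, Measure.dirac_apply, smul_eq_mul]
      by_cases h : ξe t = ξe s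
      · rw [if_pos h, Set.indicator_of_mem (by simpa using h), Pi.one_apply, mul_one]
      · rw [if_neg h, Set.indicator_of_notMem (by simpa using h), mul_zero]
    have hc_congr : ∀ s t, ξe s = ξe t → c s = c t := by
      intro s t h
      simp only [hc_def, hE_def, h]
    have hπle : ∀ s, ENNReal.ofReal (π s) ≤ c s := by
      intro s
      rw [hc_eq s]
      exact Finset.single_le_sum (f := fun t => ENNReal.ofReal (π t))
        (fun t _ => zero_le) (Finset.mem_filter.mpr ⟨Finset.mem_univ _, rfl⟩)
    have hc_ne_top : ∀ s, c s ≠ ⊤ :=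
      fun s => (measure_lt_top Plan (E s)).ne
    -- canonical representative in each fiber
    have hFne : ∀ s : Fin S, (Finset.univ.filter (fun t => ξe t = ξe s)).Nonempty :=
      fun s => ⟨s, Finset.mem_filter.mpr ⟨Finset.mem_univ _, rfl⟩⟩
    set k : Fin S → Fin S :=
      fun s => (Finset.univ.filter (fun t => ξe t = ξe s)).min' (hFne s) with hk_def
    have hkξ : ∀ s, ξe (k s) = ξe s := by
      intro s
      have := Finset.min'_mem _ (hFne s)
      exact (Finset.mem_filter.mp this).2
    have hkk : ∀ s t, ξe s = ξe t → k s = k t := by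
      intro s t h
      simp only [hk_def, h]
    have hk_idem : ∀ s, k (k s) = k s := fun s => hkk _ _ (hkξ s)
    -- restricted first marginals
    set R : Fin S → Measure (Fin m → ℝ) :=
      fun s => (Plan.restrict (E s)).map Prod.fst with hR_def
    have hR_univ : ∀ s, R s Set.univ = c s := by
      intro s
      rw [hR_def]
      rw [Measure.map_apply measurable_fst MeasurableSet.univ, Set.preimage_univ,
        Measure.restrict_apply_univ]
    have hR_congr : ∀ s t, ξe s = ξe t → R s = R t := by
      intro s t h
      simp only [hR_def, hE_def, h]
    set Q : Fin S → Measure (Fin m → ℝ) :=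
      fun s => if c s = 0 then Measure.dirac (ξe s) else (c s)⁻¹ • R s with hQ_def
    have hQprob : ∀ s, IsProbabilityMeasure (Q s) := by
      intro s
      simp only [hQ_def]
      by_cases h : c s = 0
      · rw [if_pos h]; infer_instance
      · rw [if_neg h]
        constructor
        rw [Measure.smul_apply, hR_univ, smul_eq_mul, ENNReal.inv_mul_cancel h (hc_ne_top s)]
    -- main decomposition identity preliminaries
    have hterm : ∀ s, ENNReal.ofReal (π s) • Q s
        = (ENNReal.ofReal (π s) * (c s)⁻¹) • R s := by
      intro s
      by_cases h : c s = 0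
      · have hπ0 : ENNReal.ofReal (π s) = 0 :=
          le_antisymm (h ▸ hπle s) (zero_le)
        rw [hπ0, zero_smul, zero_mul, zero_smul]
      · simp only [hQ_def, if_neg h]
        rw [smul_smul]
    have hfib_sum : ∀ t, k t = t →
        ∑ s ∈ Finset.univ.filter (fun s => k s = t), ENNReal.ofReal (π s) = c t := by
      intro t ht
      rw [hc_eq t]
      refine Finset.sum_congr ?_ fun _ _ => rfl
      refine Finset.filter_congr fun s _ => ?_
      constructor
      · intro h; rw [← h]; exact (hkξ s).symm
      · intro h; rw [hkk s t h, ht]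
    have hc_k : ∀ s, c (k s) = c s := fun s => hc_congr _ _ (hkξ s)
    have hR_k : ∀ s, R (k s) = R s := fun s => hR_congr _ _ (hkξ s)
    -- the null complement
    set U : Set ((Fin m → ℝ) × (Fin m → ℝ)) :=
      ⋃ t, (if k t = t then E t else ∅) with hU_def
    have hD_meas : ∀ t, MeasurableSet (if k t = t then E t else (∅ : Set _)) := by
      intro t
      by_cases h : k t = t
      · rw [if_pos h]; exact hE t
      · rw [if_neg h]; exact MeasurableSet.empty
    have hD_disj : Pairwise (Function.onFun Disjoint
        (fun t => if k t = t then E t else (∅ : Set ((Fin m → ℝ) × (Fin m → ℝ))))) := by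
      intro s t hst
      unfold Function.onFun
      dsimp only
      by_cases hs : k s = s
      · by_cases ht : k t = t
        · rw [if_pos hs, if_pos ht]
          rw [Set.disjoint_left]
          intro p hps hpt
          apply hst
          have h1 : ξe s = ξe t := by
            have e1 : p.2 = ξe s := hps
            have e2 : p.2 = ξe t := hpt
            rw [← e1, e2]
          rw [← hs, ← ht]
          exact hkk s t h1
        · rw [if_neg ht]; exact disjoint_bot_right
      · rw [if_neg hs]; exact disjoint_bot_left
    have hU_mem : ∀ᵐ p ∂Plan, p ∈ U := by
      rw [MeasureTheory.ae_iff]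
      have hsub : {p : (Fin m → ℝ) × (Fin m → ℝ) | ¬ p ∈ U} ⊆
          Prod.snd ⁻¹' (Set.range ξe)ᶜ := by
        intro p hp
        simp only [Set.mem_preimage, Set.mem_compl_iff, Set.mem_range]
        rintro ⟨s, hs⟩
        apply hp
        rw [hU_def]
        refine Set.mem_iUnion.mpr ⟨k s, ?_⟩
        rw [if_pos (hk_idem s)]
        show p.2 = ξe (k s)
        rw [hkξ s, hs]
      refine measure_mono_null hsub ?_
      rw [← Measure.map_apply measurable_snd
        (Set.finite_range ξe).measurableSet.compl, hsnd]
      rw [Measure.finset_sum_apply]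
      refine Finset.sum_eq_zero fun s _ => ?_
      rw [Measure.smul_apply, Measure.dirac_apply, smul_eq_mul,
        Set.indicator_of_notMem (by simp [Set.mem_range_self s]), mul_zero]
    have hrestrU : Plan.restrict U = Plan := Measure.restrict_eq_self_of_ae_mem hU_mem
    have hsum_canonical : ∑ t, (if k t = t then R t else 0) = P := by
      have h1 : ∀ t, (if k t = t then R t else 0)
          = (Plan.restrict (if k t = t then E t else ∅)).map Prod.fst := by
        intro t
        by_cases h : k t = t
        · rw [if_pos h, if_pos h, hR_def]
        · rw [if_neg h, if_neg h, Measure.restrict_empty, Measure.map_zero]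
      rw [Finset.sum_congr rfl fun t _ => h1 t, ← map_finsum_measure _ _ measurable_fst,
        ← Measure.sum_fintype, ← Measure.restrict_iUnion hD_disj hD_meas, ← hU_def,
        hrestrU, hfst]
    -- the decomposition equals P
    have hdecomp : (∑ s, ENNReal.ofReal (π s) • Q s) = P := by
      rw [Finset.sum_congr rfl fun s _ => hterm s]
      rw [fiber_sum k hk_idem _ c R hc_k hR_k hfib_sum]
      rw [← hsum_canonical]
      refine Finset.sum_congr rfl fun t _ => ?_
      by_cases ht : k t = t
      · rw [if_pos ht, if_pos ht]
        by_cases hc0 : c t = 0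
        · have : R t = 0 := by
            have := hR_univ t
            rw [hc0] at this
            exact Measure.measure_univ_eq_zero.mp this
          rw [this, smul_zero]
        · rw [ENNReal.mul_inv_cancel hc0 (hc_ne_top t), one_smul]
      · rw [if_neg ht, if_neg ht]
    -- cost computation
    refine iInf_le_of_le Q (iInf_le_of_le hQprob (iInf_le_of_le hdecomp ?_))
    have hcost_term : ∀ s, ENNReal.ofReal (π s) *
        ∫⁻ ξ, ENNReal.ofReal (∑ i, |ξ i - ξe s i|) ∂(Q s)
        = (ENNReal.ofReal (π s) * (c s)⁻¹) *
          ∫⁻ p in E s, ENNReal.ofReal (∑ i, |p.1 i - p.2 i|) ∂Plan := by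
      intro s
      by_cases h : c s = 0
      · have hπ0 : ENNReal.ofReal (π s) = 0 :=
          le_antisymm (h ▸ hπle s) (zero_le)
        rw [hπ0, zero_mul, zero_mul, zero_mul]
      · simp only [hQ_def, if_neg h]
        rw [lintegral_smul_measure, smul_eq_mul, hR_def, lintegral_map (gMeas (ξe s)) measurable_fst]
        rw [setLIntegral_congr_fun (hE s) ?_, mul_assoc]
        intro p hp
        have : p.2 = ξe s := hp
        simp only [this]
    rw [Finset.sum_congr rfl fun s _ => hcost_term s]
    have := fiber_sum (M := ENNReal) k hk_idem (fun s => ENNReal.ofReal (π s)) c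
      (fun s => ∫⁻ p in E s, ENNReal.ofReal (∑ i, |p.1 i - p.2 i|) ∂Plan)
      hc_k (fun s => by rw [hE_def]; simp only [hkξ s]) hfib_sum
    simp only [smul_eq_mul] at this
    rw [this]
    calc ∑ t, (if k t = t then (c t * (c t)⁻¹) *
          (∫⁻ p in E t, ENNReal.ofReal (∑ i, |p.1 i - p.2 i|) ∂Plan) else 0)
        ≤ ∑ t, (∫⁻ p in (if k t = t then E t else ∅),
            ENNReal.ofReal (∑ i, |p.1 i - p.2 i|) ∂Plan) := by
          refine Finset.sum_le_sum fun t _ => ?_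
          by_cases ht : k t = t
          · rw [if_pos ht, if_pos ht]
            calc c t * (c t)⁻¹ * _ ≤ 1 * _ :=
                  mul_le_mul_left (ENNReal.mul_inv_le_one (c t)) _
              _ = _ := one_mul _
          · rw [if_neg ht, if_neg ht, Measure.restrict_empty, lintegral_zero_measure]
      _ = ∫⁻ p, ENNReal.ofReal (∑ i, |p.1 i - p.2 i|) ∂Plan := by
          rw [← lintegral_finset_sum_measure, ← Measure.sum_fintype,
            ← Measure.restrict_iUnion hD_disj hD_meas, ← hU_def, hrestrU]
end

section
/- (Theorem 1) The worst-case expectation over the Wasserstein ambiguity set equals the supremum over budget-feasible discrete distributions: if Q̃ : ℝ^m → ℝ is continuous and r ≥ 0, then sup_{P ∈ 𝒫(r)} ∫ Q̃(ξ) dP(ξ) equals the supremum, over all choices of positive integers N_1,…,N_S, points ξ_{sn} ∈ Ξ and weights π_{sn} ≥ 0 (s ∈ {1,…,S}, n ∈ {1,…,N_s}) satisfying Σ_{n=1}^{N_s} π_{sn} = 1 for each s and Σ_{s=1}^S Σ_{n=1}^{N_s} π_s π_{sn} ‖ξ_{sn} − ξ^e_s‖₁ ≤ r, of the value Σ_{s=1}^S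 Σ_{n=1}^{N_s} π_s π_{sn} Q̃(ξ_{sn}). -/
open MeasureTheory Set ENNReal

noncomputable section

/-- The ℓ¹ norm on `ℝ^m`. -/
def l1norm {m : ℕ} (v : Fin m → ℝ) : ℝ := ∑ i, |v i|

/-- `Plan` is a coupling of the Borel probability measures `P` and `P'` on `ℝ^m`. -/
def IsCoupling {m : ℕ} (Plan : Measure ((Fin m → ℝ) × (Fin m → ℝ)))
    (P P' : Measure (Fin m → ℝ)) : Prop :=
  IsProbabilityMeasure Plan ∧ Plan.map Prod.fst = P ∧ Plan.map Prod.snd = P'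

/-- The empirical distribution `P^e = ∑ s, π s • δ_{ξ^e s}`. -/
def empDist {m S : ℕ} (π : Fin S → ℝ) (ξe : Fin S → Fin m → ℝ) :
    Measure (Fin m → ℝ) :=
  ∑ s, ENNReal.ofReal (π s) • Measure.dirac (ξe s)

/-- The Wasserstein ambiguity set `𝒫(r)` of radius `r` around the empirical distribution,
supported on the box `Ξ = [lo, hi]`. -/
def amb {m S : ℕ} (lo hi : Fin m → ℝ) (π : Fin S → ℝ)
    (ξe : Fin S → Fin m → ℝ) (r : ℝ) : Set (Measure (Fin m → ℝ)) :=
  {P | IsProbabilityMeasure P ∧ P (Set.Icc lo hi) = 1 ∧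
    ∃ Plan : Measure ((Fin m → ℝ) × (Fin m → ℝ)),
      IsCoupling Plan P (empDist π ξe) ∧
      ∫⁻ p, ENNReal.ofReal (l1norm (p.1 - p.2)) ∂Plan ≤ ENNReal.ofReal r}

/-! ### basic l1 facts -/

lemma l1norm_nonneg {m : ℕ} (v : Fin m → ℝ) : 0 ≤ l1norm v :=
  Finset.sum_nonneg fun _ _ => abs_nonneg _

lemma l1norm_tri {m : ℕ} (a b c : Fin m → ℝ) :
    l1norm (a - b) ≤ l1norm (a - c) + l1norm (c - b) := by
  rw [l1norm, l1norm, l1norm, ← Finset.sum_add_distrib]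
  refine Finset.sum_le_sum fun i _ => ?_
  simp only [Pi.sub_apply]
  calc |a i - b i| = |(a i - c i) + (c i - b i)| := by ring_nf
    _ ≤ |a i - c i| + |c i - b i| := abs_add_le _ _

lemma l1norm_bound {m : ℕ} {lo hi a b : Fin m → ℝ}
    (ha : a ∈ Set.Icc lo hi) (hb : b ∈ Set.Icc lo hi) :
    l1norm (a - b) ≤ ∑ i, 2 * (|lo i| + |hi i|) := by
  refine Finset.sum_le_sum fun i _ => ?_
  have h1 : |a i| ≤ |lo i| + |hi i| := by
    rw [abs_le]
    constructor
    · have := ha.1 i; have := neg_abs_le (lo i); have := abs_nonneg (hi i); linarith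
    · have := ha.2 i; have := le_abs_self (hi i); have := abs_nonneg (lo i); linarith
  have h2 : |b i| ≤ |lo i| + |hi i| := by
    rw [abs_le]
    constructor
    · have := hb.1 i; have := neg_abs_le (lo i); have := abs_nonneg (hi i); linarith
    · have := hb.2 i; have := le_abs_self (hi i); have := abs_nonneg (lo i); linarith
  calc |(a - b) i| = |a i - b i| := rfl
    _ ≤ |a i| + |b i| := abs_sub _ _
    _ ≤ 2 * (|lo i| + |hi i|) := by linarith

lemma l1norm_continuous {m : ℕ} : Continuous (fun v : Fin m → ℝ => l1norm v) := by
  unfold l1norm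
  exact continuous_finset_sum _ fun i _ => (continuous_apply i).abs

/-! ### integrals against weighted sums of Dirac measures -/

variable {α : Type*} [MeasurableSpace α] [MeasurableSingletonClass α]

lemma integrable_dirac'' {f : α → ℝ} (hf : Measurable f) (x : α) :
    Integrable f (Measure.dirac x) := by
  refine ⟨hf.aestronglyMeasurable, ?_⟩
  rw [HasFiniteIntegral, lintegral_dirac]
  exact ENNReal.coe_lt_top

lemma integrable_wdirac {f : α → ℝ} (hf : Measurable f) (x : α) (c : ℝ) :
    Integrable f (ENNReal.ofReal c • Measure.dirac x) :=
  (integrable_dirac'' hf x).smul_measure ENNReal.ofReal_ne_top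

lemma integral_wdirac {f : α → ℝ} (x : α) (c : ℝ) (hc : 0 ≤ c) :
    ∫ a, f a ∂(ENNReal.ofReal c • Measure.dirac x) = c * f x := by
  rw [integral_smul_measure, integral_dirac, ENNReal.toReal_ofReal hc, smul_eq_mul]

lemma integral_ddsum {S : ℕ} {N : Fin S → ℕ} (w : (s : Fin S) → Fin (N s) → ℝ)
    (hw : ∀ s n, 0 ≤ w s n) (x : (s : Fin S) → Fin (N s) → α)
    {f : α → ℝ} (hf : Measurable f) :
    ∫ a, f a ∂(∑ s, ∑ n, ENNReal.ofReal (w s n) • Measure.dirac (x s n)) =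
      ∑ s, ∑ n, w s n * f (x s n) := by
  rw [integral_finset_sum_measure (fun s _ => integrable_finset_sum_measure.2
    (fun n _ => integrable_wdirac hf _ _))]
  refine Finset.sum_congr rfl fun s _ => ?_
  rw [integral_finset_sum_measure (fun n _ => integrable_wdirac hf _ _)]
  exact Finset.sum_congr rfl fun n _ => integral_wdirac _ _ (hw s n)

lemma lintegral_ddsum {S : ℕ} {N : Fin S → ℕ} (w : (s : Fin S) → Fin (N s) → ℝ)
    (x : (s : Fin S) → Fin (N s) → α) (f : α → ℝ≥0∞) :
    ∫⁻ a, f a ∂(∑ s, ∑ n, ENNReal.ofReal (w s n) • Measure.dirac (x s n)) =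
      ∑ s, ∑ n, ENNReal.ofReal (w s n) * f (x s n) := by
  rw [lintegral_finset_sum_measure]
  refine Finset.sum_congr rfl fun s _ => ?_
  rw [lintegral_finset_sum_measure]
  refine Finset.sum_congr rfl fun n _ => ?_
  rw [lintegral_smul_measure, lintegral_dirac, smul_eq_mul]

omit [MeasurableSingletonClass α] in
lemma ddsum_apply {S : ℕ} {N : Fin S → ℕ} (w : (s : Fin S) → Fin (N s) → ℝ≥0∞)
    (x : (s : Fin S) → Fin (N s) → α) {E : Set α} (hE : MeasurableSet E) :
    (∑ s, ∑ n, w s n • Measure.dirac (x s n)) E =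
      ∑ s, ∑ n, w s n * E.indicator 1 (x s n) := by
  rw [Measure.finset_sum_apply]
  refine Finset.sum_congr rfl fun s _ => ?_
  rw [Measure.finset_sum_apply]
  refine Finset.sum_congr rfl fun n _ => ?_
  rw [Measure.smul_apply, Measure.dirac_apply' _ hE, smul_eq_mul]

lemma indicator_preimage_fst {α' β : Type*} (E : Set α') (p : α' × β) :
    (Prod.fst ⁻¹' E).indicator (1 : α' × β → ℝ≥0∞) p = E.indicator 1 p.1 := by
  by_cases h : p.1 ∈ E <;> simp [Set.indicator_apply, h]

lemma indicator_preimage_snd {α' β : Type*} (E : Set β) (p : α' × β) :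
    (Prod.snd ⁻¹' E).indicator (1 : α' × β → ℝ≥0∞) p = E.indicator 1 p.2 := by
  by_cases h : p.2 ∈ E <;> simp [Set.indicator_apply, h]

/-! ### the easy direction: discrete distributions belong to the ambiguity set -/

lemma easy_dir {m S : ℕ} (lo hi : Fin m → ℝ) (ξe : Fin S → Fin m → ℝ)
    (π : Fin S → ℝ) (hπ : ∀ s, 0 ≤ π s) (hπ1 : ∑ s, π s = 1)
    (Qt : (Fin m → ℝ) → ℝ) (hQ : Continuous Qt) (r : ℝ)
    {N : Fin S → ℕ} (ξd : (s : Fin S) → Fin (N s) → Fin m → ℝ)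
    (πd : (s : Fin S) → Fin (N s) → ℝ)
    (hmem : ∀ s n, ξd s n ∈ Set.Icc lo hi) (hπd : ∀ s n, 0 ≤ πd s n)
    (hπd1 : ∀ s, ∑ n, πd s n = 1)
    (hcost : ∑ s, ∑ n, π s * πd s n * (∑ i, |ξd s n i - ξe s i|) ≤ r) :
    ∃ P ∈ amb lo hi π ξe r, (∑ s, ∑ n, π s * πd s n * Qt (ξd s n)) = ∫ ξ, Qt ξ ∂P := by
  set w : (s : Fin S) → Fin (N s) → ℝ := fun s n => π s * πd s n with hwdef
  have hwn : ∀ s n, 0 ≤ w s n := fun s n => mul_nonneg (hπ s) (hπd s n)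
  have key : ∀ s, ∑ n, ENNReal.ofReal (w s n) = ENNReal.ofReal (π s) := by
    intro s
    rw [← ENNReal.ofReal_sum_of_nonneg (fun n _ => hwn s n)]
    congr 1
    simp only [hwdef, ← Finset.mul_sum, hπd1 s, mul_one]
  set P : Measure (Fin m → ℝ) :=
    ∑ s, ∑ n, ENNReal.ofReal (w s n) • Measure.dirac (ξd s n) with hPdef
  set Plan : Measure ((Fin m → ℝ) × (Fin m → ℝ)) :=
    ∑ s, ∑ n, ENNReal.ofReal (w s n) • Measure.dirac (ξd s n, ξe s) with hPlandef
  have htot : ∑ s, ∑ n, ENNReal.ofReal (w s n) = 1 := by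
    rw [Finset.sum_congr rfl fun s _ => key s,
      ← ENNReal.ofReal_sum_of_nonneg (fun s _ => hπ s), hπ1, ENNReal.ofReal_one]
  have hPuniv : P Set.univ = 1 := by
    rw [hPdef, ddsum_apply _ _ MeasurableSet.univ]
    simp only [Set.indicator_univ, Pi.one_apply, mul_one]
    exact htot
  have hPprob : IsProbabilityMeasure P := ⟨hPuniv⟩
  have hPlanprob : IsProbabilityMeasure Plan := by
    constructor
    rw [hPlandef, ddsum_apply _ _ MeasurableSet.univ]
    simp only [Set.indicator_univ, Pi.one_apply, mul_one]
    exact htot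
  have hPIcc : P (Set.Icc lo hi) = 1 := by
    rw [hPdef, ddsum_apply _ _ measurableSet_Icc]
    rw [Finset.sum_congr rfl fun s _ => Finset.sum_congr rfl fun n _ => ?_]
    · exact htot
    · rw [Set.indicator_of_mem (hmem s n), Pi.one_apply, mul_one]
  have hfst : Plan.map Prod.fst = P := by
    refine Measure.ext fun E hE => ?_
    rw [Measure.map_apply measurable_fst hE, hPlandef, hPdef,
      ddsum_apply _ _ (measurable_fst hE), ddsum_apply _ _ hE]
    refine Finset.sum_congr rfl fun s _ => Finset.sum_congr rfl fun n _ => ?_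
    rw [indicator_preimage_fst]
  have hsnd : Plan.map Prod.snd = empDist π ξe := by
    refine Measure.ext fun E hE => ?_
    rw [Measure.map_apply measurable_snd hE, hPlandef,
      ddsum_apply _ _ (measurable_snd hE)]
    have : ∀ s, ∑ n, ENNReal.ofReal (w s n) *
        (Prod.snd ⁻¹' E).indicator (1 : ((Fin m → ℝ) × (Fin m → ℝ)) → ℝ≥0∞) (ξd s n, ξe s) =
        ENNReal.ofReal (π s) * E.indicator 1 (ξe s) := by
      intro s
      rw [Finset.sum_congr rfl fun n _ => by rw [indicator_preimage_snd]]
      show (∑ n, ENNReal.ofReal (w s n) * E.indicator 1 (ξe s)) = _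
      rw [← Finset.sum_mul, key s]
    rw [Finset.sum_congr rfl fun s _ => this s]
    rw [empDist, Measure.finset_sum_apply]
    refine Finset.sum_congr rfl fun s _ => ?_
    rw [Measure.smul_apply, Measure.dirac_apply' _ hE, smul_eq_mul]
  refine ⟨P, ⟨hPprob, hPIcc, Plan, ⟨hPlanprob, hfst, hsnd⟩, ?_⟩, ?_⟩
  · rw [hPlandef, lintegral_ddsum]
    calc ∑ s, ∑ n, ENNReal.ofReal (w s n) *
          ENNReal.ofReal (l1norm (((ξd s n, ξe s) : _ × _).1 - (ξd s n, ξe s).2))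
        = ∑ s, ∑ n, ENNReal.ofReal (w s n * l1norm (ξd s n - ξe s)) := by
          refine Finset.sum_congr rfl fun s _ => Finset.sum_congr rfl fun n _ => ?_
          rw [← ENNReal.ofReal_mul (hwn s n)]
      _ = ENNReal.ofReal (∑ s, ∑ n, w s n * l1norm (ξd s n - ξe s)) := by
          rw [ENNReal.ofReal_sum_of_nonneg fun s _ => Finset.sum_nonneg fun n _ =>
            mul_nonneg (hwn s n) (l1norm_nonneg _)]
          exact Finset.sum_congr rfl fun s _ =>
            (ENNReal.ofReal_sum_of_nonneg fun n _ =>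
              mul_nonneg (hwn s n) (l1norm_nonneg _)).symm
      _ ≤ ENNReal.ofReal r := by
          refine ENNReal.ofReal_le_ofReal ?_
          refine le_trans (le_of_eq ?_) hcost
          refine Finset.sum_congr rfl fun s _ => Finset.sum_congr rfl fun n _ => ?_
          rw [l1norm]
          congr 1
  · rw [hPdef, integral_ddsum _ hwn _ hQ.measurable]

/-! ### grid discretisation -/

variable {m : ℕ}

def stp (K : ℕ) (lo hi : Fin m → ℝ) (i : Fin m) : ℝ := (hi i - lo i) / K

def cidx (K : ℕ) (lo hi : Fin m → ℝ) (i : Fin m) (x : ℝ) : Fin (K+1) :=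
  ⟨min K (Int.toNat ⌊(x - lo i) / stp K lo hi i⌋), Nat.lt_succ_of_le (min_le_left _ _)⟩

def gpt (K : ℕ) (lo hi : Fin m → ℝ) (c : Fin m → Fin (K+1)) : Fin m → ℝ :=
  fun i => lo i + (c i : ℝ) * stp K lo hi i

def cvec (K : ℕ) (lo hi : Fin m → ℝ) (ξ : Fin m → ℝ) : Fin m → Fin (K+1) :=
  fun i => cidx K lo hi i (ξ i)

lemma stp_nonneg {K : ℕ} {lo hi : Fin m → ℝ} (hbox : ∀ i, lo i ≤ hi i) (i : Fin m) :
    0 ≤ stp K lo hi i :=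
  div_nonneg (sub_nonneg.2 (hbox i)) (Nat.cast_nonneg K)

lemma gpt_mem {K : ℕ} {lo hi : Fin m → ℝ} (hbox : ∀ i, lo i ≤ hi i) (hK : 0 < K)
    (c : Fin m → Fin (K+1)) : gpt K lo hi c ∈ Set.Icc lo hi := by
  constructor <;> intro i
  · exact le_add_of_nonneg_right (mul_nonneg (Nat.cast_nonneg _) (stp_nonneg hbox i))
  · have h1 : (c i : ℝ) * stp K lo hi i ≤ (K : ℝ) * stp K lo hi i := by
      refine mul_le_mul_of_nonneg_right ?_ (stp_nonneg hbox i)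
      exact_mod_cast Nat.cast_le.2 (Nat.le_of_lt_succ (c i).isLt)
    have h2 : (K : ℝ) * stp K lo hi i = hi i - lo i := by
      rw [stp, mul_div_cancel₀]
      exact Nat.cast_ne_zero.2 hK.ne'
    calc gpt K lo hi c i ≤ lo i + (K : ℝ) * stp K lo hi i := by simp only [gpt]; linarith
      _ = hi i := by rw [h2]; ring

lemma snap_err {K : ℕ} {lo hi : Fin m → ℝ} (hbox : ∀ i, lo i ≤ hi i) (hK : 0 < K)
    (i : Fin m) (x : ℝ) (hx : x ∈ Set.Icc (lo i) (hi i)) :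
    |lo i + ((cidx K lo hi i x : Fin (K+1)) : ℝ) * stp K lo hi i - x| ≤ stp K lo hi i := by
  have hKR : (K : ℝ) ≠ 0 := Nat.cast_ne_zero.2 hK.ne'
  rcases eq_or_lt_of_le (stp_nonneg hbox i) with h0 | hpos
  · have hst0 : stp K lo hi i = 0 := h0.symm
    have hhl : hi i - lo i = 0 := by
      rcases (_root_.div_eq_zero_iff).1 (by rw [stp] at hst0; exact hst0) with h | h
      · exact h
      · exact absurd h hKR
    have hxl : x = lo i := le_antisymm (by linarith [hx.2]) hx.1
    rw [hst0, hxl]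
    simp
  · set st := stp K lo hi i with hst
    have hstv : st = (hi i - lo i) / K := rfl
    set q := (x - lo i) / st with hq
    have hq0 : 0 ≤ q := div_nonneg (sub_nonneg.2 hx.1) hpos.le
    have hqK : q ≤ (K : ℝ) := by
      rw [hq, div_le_iff₀ hpos, hstv, mul_div_cancel₀ _ hKR]
      linarith [hx.2]
    have hfl0 : 0 ≤ ⌊q⌋ := Int.le_floor.2 (by exact_mod_cast hq0)
    have hflK : ⌊q⌋ ≤ (K : ℤ) := by
      have := Int.floor_le_floor hqK
      rwa [Int.floor_natCast] at this
    have hmin : min K (Int.toNat ⌊q⌋) = Int.toNat ⌊q⌋ :=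
      min_eq_right (by omega)
    have hcast : (((cidx K lo hi i x : Fin (K+1)) : ℕ) : ℝ) = ((⌊q⌋ : ℤ) : ℝ) := by
      rw [cidx]
      simp only [← hst, ← hq, hmin]
      exact_mod_cast congrArg (Int.cast : ℤ → ℝ) (Int.toNat_of_nonneg hfl0)
    have h1 : (⌊q⌋ : ℝ) ≤ q := Int.floor_le q
    have h2 : q < ⌊q⌋ + 1 := Int.lt_floor_add_one q
    have hxe : x = lo i + q * st := by
      rw [hq]; field_simp; ring
    rw [hcast, hxe, abs_le]
    constructor
    · nlinarith
    · nlinarith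

lemma cidx_measurable (K : ℕ) (lo hi : Fin m → ℝ) (i : Fin m) :
    Measurable (cidx K lo hi i) := by
  have h1 : Measurable fun x : ℝ => ⌊(x - lo i) / stp K lo hi i⌋ :=
    Int.measurable_floor.comp ((measurable_id.sub_const (lo i)).div_const _)
  exact (measurable_from_top (f := fun z : ℤ =>
    (⟨min K z.toNat, Nat.lt_succ_of_le (min_le_left _ _)⟩ : Fin (K+1)))).comp h1

lemma cvec_measurable (K : ℕ) (lo hi : Fin m → ℝ) :
    Measurable (cvec K lo hi) :=
  measurable_pi_lambda _ fun i => (cidx_measurable K lo hi i).comp (measurable_pi_apply i)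

lemma snap_coord {K : ℕ} {lo hi : Fin m → ℝ} (hbox : ∀ i, lo i ≤ hi i) (hK : 0 < K)
    {ξ : Fin m → ℝ} (hξ : ξ ∈ Set.Icc lo hi) (i : Fin m) :
    |gpt K lo hi (cvec K lo hi ξ) i - ξ i| ≤ stp K lo hi i :=
  snap_err hbox hK i (ξ i) ⟨hξ.1 i, hξ.2 i⟩

lemma snap_l1 {K : ℕ} {lo hi : Fin m → ℝ} (hbox : ∀ i, lo i ≤ hi i) (hK : 0 < K)
    {ξ : Fin m → ℝ} (hξ : ξ ∈ Set.Icc lo hi) :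
    l1norm (gpt K lo hi (cvec K lo hi ξ) - ξ) ≤ (∑ i, (hi i - lo i)) / K := by
  rw [l1norm, Finset.sum_div]
  exact Finset.sum_le_sum fun i _ => le_trans (snap_coord hbox hK hξ i) (le_of_eq rfl)

lemma snap_dist {K : ℕ} {lo hi : Fin m → ℝ} (hbox : ∀ i, lo i ≤ hi i) (hK : 0 < K)
    {ξ : Fin m → ℝ} (hξ : ξ ∈ Set.Icc lo hi) :
    dist (gpt K lo hi (cvec K lo hi ξ)) ξ ≤ (∑ i, (hi i - lo i)) / K := by
  have hKR : (0:ℝ) < K := by exact_mod_cast hK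
  have hΔ0 : 0 ≤ (∑ i, (hi i - lo i)) / K :=
    div_nonneg (Finset.sum_nonneg fun i _ => sub_nonneg.2 (hbox i)) hKR.le
  rw [dist_pi_le_iff hΔ0]
  intro i
  rw [Real.dist_eq]
  refine le_trans (snap_coord hbox hK hξ i) ?_
  rw [stp]
  exact (div_le_div_iff_of_pos_right hKR).2
    (Finset.single_le_sum (fun j _ => sub_nonneg.2 (hbox j)) (Finset.mem_univ i))

/-! ### regrouping and simple-function integrals -/

lemma regroup_sum {S : ℕ} {κ : Type*} [DecidableEq κ] (ξe : Fin S → κ) (π : Fin S → ℝ)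
    (H : Fin S → ℝ) (G : κ → ℝ)
    (hH : ∀ s, π s * H s = π s * G (ξe s)) :
    ∑ s, π s * H s
      = ∑ y ∈ Finset.image ξe Finset.univ,
          (∑ s ∈ Finset.univ.filter (fun s => ξe s = y), π s) * G y := by
  rw [← Finset.sum_fiberwise_of_maps_to
    (fun s _ => Finset.mem_image_of_mem ξe (Finset.mem_univ s)) (fun s => π s * H s)]
  refine Finset.sum_congr rfl fun y _ => ?_
  rw [Finset.sum_mul]
  refine Finset.sum_congr rfl fun s hs => ?_
  rw [hH s, (Finset.mem_filter.1 hs).2]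

lemma integral_simple_grid {Ω : Type*} [MeasurableSpace Ω] (μ : Measure Ω) [IsFiniteMeasure μ]
    {ι : Type*} [Fintype ι] [DecidableEq ι]
    {κ : Type*} [DecidableEq κ] (Y : Finset κ)
    {C : Ω → ι} (hC : ∀ c, MeasurableSet (C ⁻¹' {c}))
    {D : Ω → κ} (hD : ∀ y, MeasurableSet (D ⁻¹' {y}))
    (hae : ∀ᵐ ω ∂μ, D ω ∈ Y) (f : ι → κ → ℝ) :
    ∫ ω, f (C ω) (D ω) ∂μ =
      ∑ c, ∑ y ∈ Y, (μ (C ⁻¹' {c} ∩ D ⁻¹' {y})).toReal * f c y := by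
  have hmeas : ∀ (c : ι) (y : κ), MeasurableSet (C ⁻¹' {c} ∩ D ⁻¹' {y}) :=
    fun c y => (hC c).inter (hD y)
  have heq : ∫ ω, f (C ω) (D ω) ∂μ =
      ∫ ω, (∑ c, ∑ y ∈ Y, (C ⁻¹' {c} ∩ D ⁻¹' {y}).indicator (fun _ => f c y) ω) ∂μ := by
    refine integral_congr_ae ?_
    filter_upwards [hae] with ω hω
    have hterm : ∀ c, (∑ y ∈ Y, (C ⁻¹' {c} ∩ D ⁻¹' {y}).indicator (fun _ => f c y) ω)
        = if C ω = c then f c (D ω) else 0 := by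
      intro c
      have : ∀ y ∈ Y, (C ⁻¹' {c} ∩ D ⁻¹' {y}).indicator (fun _ => f c y) ω
          = if C ω = c then (if D ω = y then f c y else 0) else 0 := by
        intro y _
        by_cases hc : C ω = c <;> by_cases hy : D ω = y <;>
          simp [Set.indicator_apply, Set.mem_inter_iff, Set.mem_preimage, hc, hy]
      rw [Finset.sum_congr rfl this]
      by_cases hc : C ω = c
      · simp only [hc, if_true]
        rw [Finset.sum_ite_eq Y (D ω) (fun y => f c y), if_pos hω]
      · simp [hc]
    rw [Finset.sum_congr rfl (fun c _ => hterm c), Finset.sum_ite_eq Finset.univ (C ω) _,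
      if_pos (Finset.mem_univ _)]
  rw [heq, integral_finset_sum _ fun c _ => integrable_finset_sum _ fun y _ =>
    (integrable_const (f c y)).indicator (hmeas c y)]
  refine Finset.sum_congr rfl fun c _ => ?_
  rw [integral_finset_sum _ fun y _ => (integrable_const (f c y)).indicator (hmeas c y)]
  refine Finset.sum_congr rfl fun y _ => ?_
  rw [integral_indicator_const _ (hmeas c y), smul_eq_mul]
  rfl

lemma dite_sum {Kc : ℕ} {ι : Type*} [Fintype ι] (e : Fin Kc ≃ ι) (A : ι → ℝ) (b : ℝ) :
    ∑ n : Fin (Kc+1), (if h : (n : ℕ) < Kc then A (e ⟨n, h⟩) else b) = (∑ c, A c) + b := by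
  rw [Fin.sum_univ_castSucc]
  congr 1
  · rw [← Equiv.sum_comp e A]
    refine Finset.sum_congr rfl fun n _ => ?_
    have h : ((n.castSucc : Fin (Kc+1)) : ℕ) < Kc := by simp [n.isLt]
    rw [dif_pos h]
    exact congrArg (fun z => A (e z)) (Fin.ext (by simp))
  · rw [dif_neg (by simp)]

/-! ### the zero-radius case -/

lemma zero_case {m S : ℕ} {lo hi : Fin m → ℝ}
    {ξe : Fin S → Fin m → ℝ} {π : Fin S → ℝ} (hπ : ∀ s, 0 ≤ π s)
    {Qt : (Fin m → ℝ) → ℝ} (hQ : Continuous Qt)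
    {P : Measure (Fin m → ℝ)} (hP : P ∈ amb lo hi π ξe 0) :
    ∫ ξ, Qt ξ ∂P = ∑ s, π s * Qt (ξe s) := by
  obtain ⟨hPprob, hPIcc, Plan, ⟨hPlanprob, hfst, hsnd⟩, hcost⟩ := hP
  haveI := hPlanprob
  have h0 : ∫⁻ p, ENNReal.ofReal (l1norm (p.1 - p.2)) ∂Plan = 0 :=
    le_antisymm (by simpa using hcost) zero_le
  have hmeas : Measurable fun p : (Fin m → ℝ) × (Fin m → ℝ) =>
      ENNReal.ofReal (l1norm (p.1 - p.2)) :=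
    ENNReal.measurable_ofReal.comp
      ((l1norm_continuous.comp (continuous_fst.sub continuous_snd)).measurable)
  rw [lintegral_eq_zero_iff hmeas] at h0
  have hdiag : ∀ᵐ p ∂Plan, Qt p.1 = Qt p.2 := by
    filter_upwards [h0] with p hp
    have hple : l1norm (p.1 - p.2) ≤ 0 := ENNReal.ofReal_eq_zero.1 hp
    have hl10 : l1norm (p.1 - p.2) = 0 := le_antisymm hple (l1norm_nonneg _)
    have hpe : p.1 = p.2 := by
      have hco : ∀ i ∈ Finset.univ, |(p.1 - p.2) i| = 0 := by
        rw [← Finset.sum_eq_zero_iff_of_nonneg (fun i _ => abs_nonneg ((p.1 - p.2) i))]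
        exact hl10
      funext i
      have := hco i (Finset.mem_univ i)
      rw [abs_eq_zero] at this
      have : p.1 i - p.2 i = 0 := this
      linarith
    rw [hpe]
  have h1 : ∫ ξ, Qt ξ ∂P = ∫ p, Qt p.1 ∂Plan := by
    rw [← hfst]
    exact integral_map measurable_fst.aemeasurable hQ.aestronglyMeasurable
  have h2 : ∫ p, Qt p.2 ∂Plan = ∫ ξ, Qt ξ ∂(empDist π ξe) := by
    rw [← hsnd]
    exact (integral_map measurable_snd.aemeasurable hQ.aestronglyMeasurable).symm
  have h3 : ∫ ξ, Qt ξ ∂(empDist π ξe) = ∑ s, π s * Qt (ξe s) := by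
    rw [empDist, integral_finset_sum_measure (fun s _ => integrable_wdirac hQ.measurable _ _)]
    exact Finset.sum_congr rfl fun s _ => integral_wdirac _ _ (hπ s)
  rw [h1, integral_congr_ae hdiag, h2, h3]
section HardDir

set_option maxHeartbeats 2000000 in
lemma hard_dir {m S : ℕ} {lo hi : Fin m → ℝ} (hbox : ∀ i, lo i ≤ hi i)
    {ξe : Fin S → Fin m → ℝ} (hsamp : ∀ s, ξe s ∈ Set.Icc lo hi)
    {π : Fin S → ℝ} (hπ : ∀ s, 0 ≤ π s) (hπ1 : ∑ s, π s = 1)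
    {Qt : (Fin m → ℝ) → ℝ} (hQ : Continuous Qt) {r : ℝ} (hr : 0 < r)
    {P : Measure (Fin m → ℝ)} (hP : P ∈ amb lo hi π ξe r) {ε : ℝ} (hε : 0 < ε) :
    ∃ (N : Fin S → ℕ) (_ : ∀ s, 0 < N s)
      (ξd : (s : Fin S) → Fin (N s) → Fin m → ℝ)
      (πd : (s : Fin S) → Fin (N s) → ℝ),
      (∀ s n, ξd s n ∈ Set.Icc lo hi) ∧ (∀ s n, 0 ≤ πd s n) ∧
      (∀ s, ∑ n, πd s n = 1) ∧
      (∑ s, ∑ n, π s * πd s n * (∑ i, |ξd s n i - ξe s i|) ≤ r) ∧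
      ∫ ξ, Qt ξ ∂P - ε ≤ ∑ s, ∑ n, π s * πd s n * Qt (ξd s n) := by
  classical
  obtain ⟨hPprob, hPIcc, Plan, ⟨hPlanprob, hfst, hsnd⟩, hcost⟩ := hP
  haveI := hPprob; haveI := hPlanprob
  -- a bound for Qt on the box
  obtain ⟨C0, hC0⟩ := (isCompact_Icc : IsCompact (Set.Icc lo hi)).exists_bound_of_continuousOn
    hQ.continuousOn
  set M := max C0 0 with hMdef
  have hM0 : 0 ≤ M := le_max_right _ _
  have hM : ∀ ξ ∈ Set.Icc lo hi, |Qt ξ| ≤ M := fun ξ hξ =>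
    le_trans (hC0 ξ hξ) (le_max_left _ _)
  set ε' := ε / 2 with hε'def
  have hε' : 0 < ε' := half_pos hε
  -- uniform continuity on the box
  have hUC := (isCompact_Icc : IsCompact (Set.Icc lo hi)).uniformContinuousOn_of_continuous
    hQ.continuousOn
  rw [Metric.uniformContinuousOn_iff] at hUC
  obtain ⟨δ, hδ0, hδ⟩ := hUC ε' hε'
  -- choice of the grid resolution
  set Δ := ∑ i, (hi i - lo i) with hΔdef
  have hΔ0 : 0 ≤ Δ := Finset.sum_nonneg fun i _ => sub_nonneg.2 (hbox i)
  set θ := min δ (ε' * r / (2 * M + 1)) with hθdef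
  have hθ0 : 0 < θ := lt_min hδ0 (by positivity)
  obtain ⟨K₀, hK₀⟩ := exists_nat_gt (Δ / θ)
  set K := K₀ + 1 with hKdef
  have hK : 0 < K := Nat.succ_pos _
  have hKR : (0:ℝ) < K := by exact_mod_cast hK
  have hKθ : Δ / (K:ℝ) < θ := by
    rw [div_lt_iff₀ hKR]
    have h1 : Δ / θ < (K:ℝ) := lt_of_lt_of_le hK₀ (by exact_mod_cast Nat.le_succ K₀)
    calc Δ = (Δ / θ) * θ := by field_simp
      _ < (K:ℝ) * θ := mul_lt_mul_of_pos_right h1 hθ0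
      _ = θ * (K:ℝ) := mul_comm _ _
  set d := Δ / (K:ℝ) with hddef
  have hd0 : 0 ≤ d := div_nonneg hΔ0 hKR.le
  have hdδ : d < δ := lt_of_lt_of_le hKθ (min_le_left _ _)
  have hdr : d ≤ ε' * r / (2 * M + 1) := le_of_lt (lt_of_lt_of_le hKθ (min_le_right _ _))
  -- the mixing coefficient
  have hrd : 0 < r + d := by linarith
  set t := d / (r + d) with htdef
  have ht0 : 0 ≤ t := div_nonneg hd0 hrd.le
  have ht1 : t ≤ 1 := (div_le_one hrd).2 (by linarith)
  have htr : (1 - t) * (r + d) = r := by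
    rw [htdef]; field_simp; ring
  have ht2M : t * (2 * M) ≤ ε' := by
    have h2 : d * (2 * M + 1) ≤ ε' * r := by
      rwa [← le_div_iff₀ (by positivity : (0:ℝ) < 2 * M + 1)]
    rw [htdef, div_mul_eq_mul_div, div_le_iff₀ hrd]
    nlinarith
  -- the grid objects
  set Cf : (Fin m → ℝ) × (Fin m → ℝ) → (Fin m → Fin (K+1)) := fun p => cvec K lo hi p.1
    with hCfdef
  have hCfmeas : Measurable Cf := (cvec_measurable K lo hi).comp measurable_fst
  set img := Finset.image ξe Finset.univ with himgdef
  have hTne : ∀ y : Fin m → ℝ, Plan (Prod.snd ⁻¹' {y}) ≠ ⊤ := fun y => measure_ne_top Plan _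
  have hMne : ∀ (c : Fin m → Fin (K+1)) (y : Fin m → ℝ),
      Plan (Cf ⁻¹' {c} ∩ Prod.snd ⁻¹' {y}) ≠ ⊤ := fun c y => measure_ne_top Plan _
  have hMleT : ∀ (c : Fin m → Fin (K+1)) (y : Fin m → ℝ),
      Plan (Cf ⁻¹' {c} ∩ Prod.snd ⁻¹' {y}) ≤ Plan (Prod.snd ⁻¹' {y}) :=
    fun c y => measure_mono Set.inter_subset_right
  have hTemp : ∀ y : Fin m → ℝ, Plan (Prod.snd ⁻¹' {y})
      = ∑ s, ENNReal.ofReal (π s) * Set.indicator {y} 1 (ξe s) := by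
    intro y
    rw [← Measure.map_apply measurable_snd (measurableSet_singleton y), hsnd, empDist,
      Measure.finset_sum_apply]
    refine Finset.sum_congr rfl fun s _ => ?_
    rw [Measure.smul_apply, Measure.dirac_apply' _ (measurableSet_singleton y), smul_eq_mul]
  have hπT : ∀ s, ENNReal.ofReal (π s) ≤ Plan (Prod.snd ⁻¹' {ξe s}) := by
    intro s
    rw [hTemp]
    calc ENNReal.ofReal (π s)
        = ENNReal.ofReal (π s) * Set.indicator {ξe s} 1 (ξe s) := by
          rw [Set.indicator_of_mem (Set.mem_singleton _), Pi.one_apply, mul_one]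
      _ ≤ _ := Finset.single_le_sum
          (f := fun s' => ENNReal.ofReal (π s') * Set.indicator {ξe s} 1 (ξe s'))
          (fun _ _ => zero_le) (Finset.mem_univ s)
  have hπ0 : ∀ s, Plan (Prod.snd ⁻¹' {ξe s}) = 0 → π s = 0 := by
    intro s h
    have h2 := hπT s
    rw [h, le_zero_iff, ENNReal.ofReal_eq_zero] at h2
    linarith [hπ s]
  have hTsum : ∀ y : Fin m → ℝ, (Plan (Prod.snd ⁻¹' {y})).toReal
      = ∑ s ∈ Finset.univ.filter (fun s => ξe s = y), π s := by
    intro y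
    rw [hTemp, ENNReal.toReal_sum (fun s _ => ENNReal.mul_ne_top ENNReal.ofReal_ne_top
      (by by_cases h : ξe s ∈ ({y} : Set (Fin m → ℝ)) <;>
        simp [Set.indicator_of_mem, Set.indicator_of_notMem, h])),
      Finset.sum_filter]
    refine Finset.sum_congr rfl fun s _ => ?_
    by_cases h : ξe s = y
    · rw [if_pos h, Set.indicator_of_mem (by simp [h]), Pi.one_apply, mul_one,
        ENNReal.toReal_ofReal (hπ s)]
    · rw [Set.indicator_of_notMem (by simp [h]), mul_zero, ENNReal.toReal_zero, if_neg h]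
  -- the conditional weights
  set base : Fin S → (Fin m → Fin (K+1)) → ℝ := fun s c =>
    if Plan (Prod.snd ⁻¹' {ξe s}) = 0 then (if c = cvec K lo hi (ξe s) then 1 else 0)
    else (Plan (Cf ⁻¹' {c} ∩ Prod.snd ⁻¹' {ξe s}) / Plan (Prod.snd ⁻¹' {ξe s})).toReal
    with hbasedef
  have hbase0 : ∀ s c, 0 ≤ base s c := by
    intro s c
    simp only [hbasedef]
    split
    · split <;> norm_num
    · exact ENNReal.toReal_nonneg
  have hpartition : ∀ s, ∑ c, Plan (Cf ⁻¹' {c} ∩ Prod.snd ⁻¹' {ξe s})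
      = Plan (Prod.snd ⁻¹' {ξe s}) := by
    intro s
    have hdisj : Set.PairwiseDisjoint
        ((Finset.univ : Finset (Fin m → Fin (K+1))) : Set (Fin m → Fin (K+1)))
        (fun c => Cf ⁻¹' {c} ∩ Prod.snd ⁻¹' {ξe s}) := by
      intro c1 _ c2 _ hne
      refine Set.disjoint_left.2 fun p hp1 hp2 => hne ?_
      exact hp1.1.symm.trans hp2.1
    have hms : ∀ c ∈ (Finset.univ : Finset (Fin m → Fin (K+1))),
        MeasurableSet (Cf ⁻¹' {c} ∩ Prod.snd ⁻¹' {ξe s}) := fun c _ =>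
      (hCfmeas (measurableSet_singleton c)).inter (measurable_snd (measurableSet_singleton _))
    rw [← measure_biUnion_finset hdisj hms]
    congr 1
    ext p
    simp only [Set.mem_iUnion, Set.mem_inter_iff, Set.mem_preimage, Set.mem_singleton_iff,
      Finset.mem_univ, exists_true_left]
    exact ⟨fun ⟨c, hc⟩ => hc.2, fun h => ⟨Cf p, rfl, h⟩⟩
  have hbase1 : ∀ s, ∑ c, base s c = 1 := by
    intro s
    simp only [hbasedef]
    by_cases h : Plan (Prod.snd ⁻¹' {ξe s}) = 0
    · simp only [if_pos h]
      rw [Finset.sum_ite_eq' Finset.univ (cvec K lo hi (ξe s)) (fun _ => (1:ℝ)),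
        if_pos (Finset.mem_univ _)]
    · simp only [if_neg h]
      have hfin : ∀ c : Fin m → Fin (K+1),
          Plan (Cf ⁻¹' {c} ∩ Prod.snd ⁻¹' {ξe s}) / Plan (Prod.snd ⁻¹' {ξe s}) ≠ ⊤ :=
        fun c => (ENNReal.div_lt_top (hMne c _) h).ne
      rw [← ENNReal.toReal_sum (fun c _ => hfin c)]
      have : ∑ c, Plan (Cf ⁻¹' {c} ∩ Prod.snd ⁻¹' {ξe s}) / Plan (Prod.snd ⁻¹' {ξe s})
          = 1 := by
        rw [Finset.sum_congr rfl fun c _ =>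
          div_eq_mul_inv (Plan (Cf ⁻¹' {c} ∩ Prod.snd ⁻¹' {ξe s})) _,
          ← Finset.sum_mul, hpartition s, ← div_eq_mul_inv,
          ENNReal.div_self h (hTne _)]
      rw [this, ENNReal.toReal_one]
  -- a.e. facts
  have haeY : ∀ᵐ p ∂Plan, p.2 ∈ img := by
    rw [ae_iff]
    have hset : {p : (Fin m → ℝ) × (Fin m → ℝ) | ¬ p.2 ∈ img}
        = Prod.snd ⁻¹' ((↑img : Set (Fin m → ℝ))ᶜ) := rfl
    rw [hset, ← Measure.map_apply measurable_snd img.finite_toSet.measurableSet.compl, hsnd,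
      empDist, Measure.finset_sum_apply]
    refine Finset.sum_eq_zero fun s _ => ?_
    rw [Measure.smul_apply, Measure.dirac_apply' _ img.finite_toSet.measurableSet.compl,
      Set.indicator_of_notMem, smul_zero]
    rw [Set.notMem_compl_iff]
    exact Finset.mem_coe.2 (Finset.mem_image_of_mem ξe (Finset.mem_univ s))
  have hPIccC : P ((Set.Icc lo hi)ᶜ) = 0 := by
    rw [measure_compl measurableSet_Icc (measure_ne_top P _), measure_univ, hPIcc, tsub_self]
  have haeB : ∀ᵐ p ∂Plan, p.1 ∈ Set.Icc lo hi := by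
    rw [ae_iff]
    have hset : {p : (Fin m → ℝ) × (Fin m → ℝ) | ¬ p.1 ∈ Set.Icc lo hi}
        = Prod.fst ⁻¹' ((Set.Icc lo hi)ᶜ) := rfl
    rw [hset, ← Measure.map_apply measurable_fst measurableSet_Icc.compl, hfst]
    exact hPIccC
  -- the key identity
  have hID : ∀ f : (Fin m → Fin (K+1)) → (Fin m → ℝ) → ℝ,
      ∑ s, π s * (∑ c, base s c * f c (ξe s)) = ∫ p, f (Cf p) p.2 ∂Plan := by
    intro f
    rw [integral_simple_grid Plan img (fun c => hCfmeas (measurableSet_singleton c))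
      (fun y => measurable_snd (measurableSet_singleton y)) haeY f]
    have hswap : ∑ s, π s * (∑ c, base s c * f c (ξe s))
        = ∑ c, ∑ s, π s * (base s c * f c (ξe s)) := by
      rw [Finset.sum_congr rfl fun s _ => Finset.mul_sum _ _ _]
      exact Finset.sum_comm
    rw [hswap]
    refine Finset.sum_congr rfl fun c _ => ?_
    rw [regroup_sum ξe π (fun s => base s c * f c (ξe s))
      (fun y => (if Plan (Prod.snd ⁻¹' {y}) = 0 then 0
        else (Plan (Cf ⁻¹' {c} ∩ Prod.snd ⁻¹' {y}) / Plan (Prod.snd ⁻¹' {y})).toReal)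
        * f c y) ?_]
    · refine Finset.sum_congr rfl fun y _ => ?_
      rw [← hTsum y]
      by_cases h : Plan (Prod.snd ⁻¹' {y}) = 0
      · have hM0' : Plan (Cf ⁻¹' {c} ∩ Prod.snd ⁻¹' {y}) = 0 :=
          le_antisymm (h ▸ hMleT c y) zero_le
        rw [if_pos h, h, hM0', ENNReal.toReal_zero]
        ring
      · rw [if_neg h, ENNReal.toReal_div]
        have hT0 : (Plan (Prod.snd ⁻¹' {y})).toReal ≠ 0 :=
          ENNReal.toReal_ne_zero.2 ⟨h, hTne y⟩
        field_simp
    · intro s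
      by_cases h : Plan (Prod.snd ⁻¹' {ξe s}) = 0
      · rw [hπ0 s h]; ring
      · simp only [hbasedef, if_neg h]
  -- value and cost for the plain grid approximation
  set V := ∑ s, π s * (∑ c, base s c * Qt (gpt K lo hi c)) with hVdef
  set W := ∑ s, π s * Qt (ξe s) with hWdef
  set Co := ∑ s, π s * (∑ c, base s c * l1norm (gpt K lo hi c - ξe s)) with hCodef
  have hIDV : V = ∫ p, Qt (gpt K lo hi (Cf p)) ∂Plan := hID fun c _ => Qt (gpt K lo hi c)
  have hIDC : Co = ∫ p, l1norm (gpt K lo hi (Cf p) - p.2) ∂Plan :=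
    hID fun c y => l1norm (gpt K lo hi c - y)
  -- integrability facts
  have hmeas1 : Measurable fun p : (Fin m → ℝ) × (Fin m → ℝ) => Qt (gpt K lo hi (Cf p)) :=
    (measurable_of_countable fun c => Qt (gpt K lo hi c)).comp hCfmeas
  have hint1 : Integrable (fun p : (Fin m → ℝ) × (Fin m → ℝ) => Qt (gpt K lo hi (Cf p))) Plan := by
    refine Integrable.mono' (integrable_const M) hmeas1.aestronglyMeasurable ?_
    refine ae_of_all _ fun p => ?_
    rw [Real.norm_eq_abs]
    exact hM _ (gpt_mem hbox hK _)
  have hint2 : Integrable (fun p : (Fin m → ℝ) × (Fin m → ℝ) => Qt p.1) Plan := by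
    refine Integrable.mono' (integrable_const M)
      ((hQ.comp continuous_fst).aestronglyMeasurable) ?_
    filter_upwards [haeB] with p hp
    rw [Real.norm_eq_abs]
    exact hM _ hp
  set B := ∑ i, 2 * (|lo i| + |hi i|) with hBdef
  have himgIcc : ∀ y ∈ img, y ∈ Set.Icc lo hi := by
    intro y hy
    obtain ⟨s, _, rfl⟩ := Finset.mem_image.1 hy
    exact hsamp s
  have hint3 : Integrable (fun p : (Fin m → ℝ) × (Fin m → ℝ) => l1norm (p.1 - p.2)) Plan := by
    refine Integrable.mono' (integrable_const B)
      ((l1norm_continuous.comp (continuous_fst.sub continuous_snd)).aestronglyMeasurable) ?_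
    filter_upwards [haeB, haeY] with p hp1 hp2
    rw [Real.norm_eq_abs, abs_of_nonneg (l1norm_nonneg _)]
    exact l1norm_bound hp1 (himgIcc _ hp2)
  have hmeas4 : Measurable fun p : (Fin m → ℝ) × (Fin m → ℝ) =>
      l1norm (gpt K lo hi (Cf p) - p.2) := by
    have hpair : Measurable fun p : (Fin m → ℝ) × (Fin m → ℝ) =>
        ((gpt K lo hi (Cf p), p.2) : (Fin m → ℝ) × (Fin m → ℝ)) :=
      ((measurable_of_countable fun c => gpt K lo hi c).comp hCfmeas).prodMk measurable_snd
    exact ((l1norm_continuous.comp (continuous_fst.sub continuous_snd)).measurable).comp hpair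
  have hint4 : Integrable (fun p : (Fin m → ℝ) × (Fin m → ℝ) =>
      l1norm (gpt K lo hi (Cf p) - p.2)) Plan := by
    refine Integrable.mono' (integrable_const B) hmeas4.aestronglyMeasurable ?_
    filter_upwards [haeY] with p hp
    rw [Real.norm_eq_abs, abs_of_nonneg (l1norm_nonneg _)]
    exact l1norm_bound (gpt_mem hbox hK _) (himgIcc _ hp)
  -- value comparison
  have hv : ∫ ξ, Qt ξ ∂P = ∫ p, Qt p.1 ∂Plan := by
    rw [← hfst]
    exact integral_map measurable_fst.aemeasurable hQ.aestronglyMeasurable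
  have hVclose : |V - ∫ ξ, Qt ξ ∂P| ≤ ε' := by
    rw [hIDV, hv, ← integral_sub hint1 hint2]
    have hb : ∀ᵐ p ∂Plan, ‖Qt (gpt K lo hi (Cf p)) - Qt p.1‖ ≤ ε' := by
      filter_upwards [haeB] with p hp
      rw [Real.norm_eq_abs, ← Real.dist_eq]
      refine le_of_lt (hδ _ (gpt_mem hbox hK _) _ hp ?_)
      exact lt_of_le_of_lt (snap_dist hbox hK hp) hdδ
    calc |∫ p, (Qt (gpt K lo hi (Cf p)) - Qt p.1) ∂Plan|
        ≤ ∫ p, ‖Qt (gpt K lo hi (Cf p)) - Qt p.1‖ ∂Plan := by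
          rw [← Real.norm_eq_abs]
          exact norm_integral_le_integral_norm _
      _ ≤ ∫ _, ε' ∂Plan := integral_mono_ae (hint1.sub hint2).norm (integrable_const ε') hb
      _ = ε' := by simp [measure_univ]
  -- cost comparison
  have hCole : Co ≤ r + d := by
    rw [hIDC]
    have hb : ∀ᵐ p ∂Plan, l1norm (gpt K lo hi (Cf p) - p.2) ≤ l1norm (p.1 - p.2) + d := by
      filter_upwards [haeB] with p hp
      refine le_trans (l1norm_tri _ _ p.1) ?_
      have := snap_l1 hbox hK hp
      linarith
    have hcost_real : ∫ p, l1norm (p.1 - p.2) ∂Plan ≤ r := by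
      rw [integral_eq_lintegral_of_nonneg_ae (f := fun p : (Fin m → ℝ) × (Fin m → ℝ) => l1norm (p.1 - p.2)) (ae_of_all _ fun p => l1norm_nonneg _)
        ((l1norm_continuous.comp (continuous_fst.sub continuous_snd)).aestronglyMeasurable)]
      calc (∫⁻ p, ENNReal.ofReal (l1norm (p.1 - p.2)) ∂Plan).toReal
          ≤ (ENNReal.ofReal r).toReal := ENNReal.toReal_mono ENNReal.ofReal_ne_top hcost
        _ = r := ENNReal.toReal_ofReal hr.le
    calc ∫ p, l1norm (gpt K lo hi (Cf p) - p.2) ∂Plan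
        ≤ ∫ p, (l1norm (p.1 - p.2) + d) ∂Plan :=
          integral_mono_ae hint4 (hint3.add (integrable_const d)) hb
      _ = (∫ p, l1norm (p.1 - p.2) ∂Plan) + d := by
          rw [integral_add hint3 (integrable_const d)]
          simp [measure_univ]
      _ ≤ r + d := by linarith
  -- bounds on V and W
  have hVb : |V| ≤ M := by
    rw [hVdef]
    calc |∑ s, π s * (∑ c, base s c * Qt (gpt K lo hi c))|
        ≤ ∑ s, |π s * (∑ c, base s c * Qt (gpt K lo hi c))| :=
          Finset.abs_sum_le_sum_abs _ _
      _ ≤ ∑ s, π s * M := by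
          refine Finset.sum_le_sum fun s _ => ?_
          rw [abs_mul, abs_of_nonneg (hπ s)]
          refine mul_le_mul_of_nonneg_left ?_ (hπ s)
          calc |∑ c, base s c * Qt (gpt K lo hi c)|
              ≤ ∑ c, |base s c * Qt (gpt K lo hi c)| := Finset.abs_sum_le_sum_abs _ _
            _ ≤ ∑ c, base s c * M := by
                refine Finset.sum_le_sum fun c _ => ?_
                rw [abs_mul, abs_of_nonneg (hbase0 s c)]
                exact mul_le_mul_of_nonneg_left (hM _ (gpt_mem hbox hK _)) (hbase0 s c)
            _ = M := by rw [← Finset.sum_mul, hbase1 s, one_mul]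
      _ = M := by rw [← Finset.sum_mul, hπ1, one_mul]
  have hWb : |W| ≤ M := by
    rw [hWdef]
    calc |∑ s, π s * Qt (ξe s)| ≤ ∑ s, |π s * Qt (ξe s)| := Finset.abs_sum_le_sum_abs _ _
      _ ≤ ∑ s, π s * M := by
          refine Finset.sum_le_sum fun s _ => ?_
          rw [abs_mul, abs_of_nonneg (hπ s)]
          exact mul_le_mul_of_nonneg_left (hM _ (hsamp s)) (hπ s)
      _ = M := by rw [← Finset.sum_mul, hπ1, one_mul]
  -- the discrete element
  set Kc := Fintype.card (Fin m → Fin (K+1)) with hKcdef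
  set e : Fin Kc ≃ (Fin m → Fin (K+1)) := (Fintype.equivFin _).symm with hedef
  refine ⟨fun _ => Kc + 1, fun _ => Nat.succ_pos _,
    fun s n => if h : (n : ℕ) < Kc then gpt K lo hi (e ⟨n, h⟩) else ξe s,
    fun s n => if h : (n : ℕ) < Kc then (1 - t) * base s (e ⟨n, h⟩) else t,
    fun s n => ?_, fun s n => ?_, fun s => ?_, ?_, ?_⟩
  · dsimp only
    split
    · exact gpt_mem hbox hK _
    · exact hsamp s
  · dsimp only
    split
    · exact mul_nonneg (by linarith) (hbase0 _ _)
    · exact ht0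
  · rw [dite_sum e (fun c => (1 - t) * base s c) t, ← Finset.mul_sum, hbase1 s]
    ring
  · -- cost constraint
    have hper : ∀ s, ∑ n : Fin (Kc + 1),
        π s * (if h : (n : ℕ) < Kc then (1 - t) * base s (e ⟨n, h⟩) else t)
          * (∑ i, |(if h : (n : ℕ) < Kc then gpt K lo hi (e ⟨n, h⟩) else ξe s) i - ξe s i|)
        = (1 - t) * (π s * (∑ c, base s c * l1norm (gpt K lo hi c - ξe s))) := by
      intro s
      have hcong : ∀ n : Fin (Kc + 1),
          π s * (if h : (n : ℕ) < Kc then (1 - t) * base s (e ⟨n, h⟩) else t)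
            * (∑ i, |(if h : (n : ℕ) < Kc then gpt K lo hi (e ⟨n, h⟩) else ξe s) i - ξe s i|)
          = if h : (n : ℕ) < Kc then
              π s * ((1 - t) * base s (e ⟨n, h⟩)) * l1norm (gpt K lo hi (e ⟨n, h⟩) - ξe s)
            else 0 := by
        intro n
        by_cases h : (n : ℕ) < Kc
        · rw [dif_pos h, dif_pos h, dif_pos h]
          simp only [l1norm, Pi.sub_apply]
        · rw [dif_neg h, dif_neg h, dif_neg h]
          simp
      rw [Finset.sum_congr rfl fun n _ => hcong n,
        dite_sum e (fun c => π s * ((1 - t) * base s c) * l1norm (gpt K lo hi c - ξe s)) 0,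
        add_zero, Finset.mul_sum, Finset.mul_sum]
      refine Finset.sum_congr rfl fun c _ => ?_
      ring
    rw [Finset.sum_congr rfl fun s _ => hper s, ← Finset.mul_sum, ← hCodef]
    calc (1 - t) * Co ≤ (1 - t) * (r + d) :=
        mul_le_mul_of_nonneg_left hCole (by linarith)
      _ = r := htr
  · -- value bound
    have hper : ∀ s, ∑ n : Fin (Kc + 1),
        π s * (if h : (n : ℕ) < Kc then (1 - t) * base s (e ⟨n, h⟩) else t)
          * Qt (if h : (n : ℕ) < Kc then gpt K lo hi (e ⟨n, h⟩) else ξe s)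
        = (1 - t) * (π s * (∑ c, base s c * Qt (gpt K lo hi c))) + t * (π s * Qt (ξe s)) := by
      intro s
      have hcong : ∀ n : Fin (Kc + 1),
          π s * (if h : (n : ℕ) < Kc then (1 - t) * base s (e ⟨n, h⟩) else t)
            * Qt (if h : (n : ℕ) < Kc then gpt K lo hi (e ⟨n, h⟩) else ξe s)
          = if h : (n : ℕ) < Kc then
              π s * ((1 - t) * base s (e ⟨n, h⟩)) * Qt (gpt K lo hi (e ⟨n, h⟩))
            else π s * t * Qt (ξe s) := by
        intro n
        by_cases h : (n : ℕ) < Kc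
        · rw [dif_pos h, dif_pos h, dif_pos h]
        · rw [dif_neg h, dif_neg h, dif_neg h]
      rw [Finset.sum_congr rfl fun n _ => hcong n,
        dite_sum e (fun c => π s * ((1 - t) * base s c) * Qt (gpt K lo hi c))
          (π s * t * Qt (ξe s)), Finset.mul_sum, Finset.mul_sum]
      have : ∑ c, π s * ((1 - t) * base s c) * Qt (gpt K lo hi c)
          = ∑ c, (1 - t) * (π s * (base s c * Qt (gpt K lo hi c))) :=
        Finset.sum_congr rfl fun c _ => by ring
      rw [this]
      ring
    rw [Finset.sum_congr rfl fun s _ => hper s, Finset.sum_add_distrib,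
      ← Finset.mul_sum, ← Finset.mul_sum, ← hVdef, ← hWdef]
    have h1 : V - W ≤ 2 * M := by
      have := abs_le.1 hVb
      have := abs_le.1 hWb
      linarith
    have h2 : t * (V - W) ≤ t * (2 * M) := mul_le_mul_of_nonneg_left h1 ht0
    have h3 := abs_le.1 hVclose
    have heq : (1 - t) * V + t * W = V - t * (V - W) := by ring
    rw [heq]
    have : ε = 2 * ε' := by rw [hε'def]; ring
    linarith [h3.1, h3.2]

end HardDir

/-- (Theorem 1) The worst-case expectation over the Wasserstein ambiguity set equals the
supremum over budget-feasible discrete distributions. -/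
theorem stmt9 {m S : ℕ} (lo hi : Fin m → ℝ) (hbox : ∀ i, lo i ≤ hi i)
    (ξe : Fin S → Fin m → ℝ) (hsamp : ∀ s, ξe s ∈ Set.Icc lo hi)
    (π : Fin S → ℝ) (hπ : ∀ s, 0 ≤ π s) (hπ1 : ∑ s, π s = 1)
    (Qt : (Fin m → ℝ) → ℝ) (hQ : Continuous Qt) (r : ℝ) (hr : 0 ≤ r) :
    sSup {v : ℝ | ∃ P ∈ amb lo hi π ξe r, v = ∫ ξ, Qt ξ ∂P} =
      sSup {v : ℝ | ∃ (N : Fin S → ℕ) (_ : ∀ s, 0 < N s)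
        (ξd : (s : Fin S) → Fin (N s) → Fin m → ℝ)
        (πd : (s : Fin S) → Fin (N s) → ℝ),
        (∀ s n, ξd s n ∈ Set.Icc lo hi) ∧ (∀ s n, 0 ≤ πd s n) ∧
        (∀ s, ∑ n, πd s n = 1) ∧
        (∑ s, ∑ n, π s * πd s n * (∑ i, |ξd s n i - ξe s i|) ≤ r) ∧
        v = ∑ s, ∑ n, π s * πd s n * Qt (ξd s n)} := by
  classical
  obtain ⟨C0, hC0⟩ := (isCompact_Icc : IsCompact (Set.Icc lo hi)).exists_bound_of_continuousOn
    hQ.continuousOn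
  set M := max C0 0 with hMdef
  have hM : ∀ ξ ∈ Set.Icc lo hi, |Qt ξ| ≤ M := fun ξ hξ =>
    le_trans (hC0 ξ hξ) (le_max_left _ _)
  -- trivial discrete data
  have htrivcost : ∑ s, ∑ _n : Fin 1, π s * 1 * (∑ i, |ξe s i - ξe s i|) ≤ r := by
    have : ∀ s, ∑ _n : Fin 1, π s * 1 * (∑ i, |ξe s i - ξe s i|) = 0 := by
      intro s; simp [sub_self]
    rw [Finset.sum_congr rfl fun s _ => this s]
    simpa using hr
  have htrivmem : (∑ s, ∑ _n : Fin 1, π s * 1 * Qt (ξe s)) ∈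
      {v : ℝ | ∃ (N : Fin S → ℕ) (_ : ∀ s, 0 < N s)
        (ξd : (s : Fin S) → Fin (N s) → Fin m → ℝ)
        (πd : (s : Fin S) → Fin (N s) → ℝ),
        (∀ s n, ξd s n ∈ Set.Icc lo hi) ∧ (∀ s n, 0 ≤ πd s n) ∧
        (∀ s, ∑ n, πd s n = 1) ∧
        (∑ s, ∑ n, π s * πd s n * (∑ i, |ξd s n i - ξe s i|) ≤ r) ∧
        v = ∑ s, ∑ n, π s * πd s n * Qt (ξd s n)} :=
    ⟨fun _ => 1, fun _ => Nat.one_pos, fun s _ => ξe s, fun _ _ => 1,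
      fun s _ => hsamp s, fun _ _ => zero_le_one, fun s => by simp, htrivcost, rfl⟩
  have hRHSne : {v : ℝ | ∃ (N : Fin S → ℕ) (_ : ∀ s, 0 < N s)
        (ξd : (s : Fin S) → Fin (N s) → Fin m → ℝ)
        (πd : (s : Fin S) → Fin (N s) → ℝ),
        (∀ s n, ξd s n ∈ Set.Icc lo hi) ∧ (∀ s n, 0 ≤ πd s n) ∧
        (∀ s, ∑ n, πd s n = 1) ∧
        (∑ s, ∑ n, π s * πd s n * (∑ i, |ξd s n i - ξe s i|) ≤ r) ∧
        v = ∑ s, ∑ n, π s * πd s n * Qt (ξd s n)}.Nonempty := ⟨_, htrivmem⟩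
  have hRHSbdd : BddAbove {v : ℝ | ∃ (N : Fin S → ℕ) (_ : ∀ s, 0 < N s)
        (ξd : (s : Fin S) → Fin (N s) → Fin m → ℝ)
        (πd : (s : Fin S) → Fin (N s) → ℝ),
        (∀ s n, ξd s n ∈ Set.Icc lo hi) ∧ (∀ s n, 0 ≤ πd s n) ∧
        (∀ s, ∑ n, πd s n = 1) ∧
        (∑ s, ∑ n, π s * πd s n * (∑ i, |ξd s n i - ξe s i|) ≤ r) ∧
        v = ∑ s, ∑ n, π s * πd s n * Qt (ξd s n)} := by
    refine ⟨M, fun v hv => ?_⟩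
    obtain ⟨N, hN, ξd, πd, hmem, hnn, h1, hc, rfl⟩ := hv
    calc ∑ s, ∑ n, π s * πd s n * Qt (ξd s n)
        ≤ ∑ s, ∑ n, π s * πd s n * M := by
          refine Finset.sum_le_sum fun s _ => Finset.sum_le_sum fun n _ => ?_
          exact mul_le_mul_of_nonneg_left
            (le_trans (le_abs_self _) (hM _ (hmem s n)))
            (mul_nonneg (hπ s) (hnn s n))
      _ = M := by
          have hs : ∀ s, ∑ n, π s * πd s n * M = π s * M := by
            intro s
            rw [Finset.sum_congr rfl fun n _ => (by ring :
              π s * πd s n * M = πd s n * (π s * M)), ← Finset.sum_mul, h1 s, one_mul]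
          rw [Finset.sum_congr rfl fun s _ => hs s, ← Finset.sum_mul, hπ1, one_mul]
  obtain ⟨P₀, hP₀amb, hP₀v⟩ := easy_dir lo hi ξe π hπ hπ1 Qt hQ r
    (fun s (_ : Fin 1) => ξe s) (fun _ _ => 1) (fun s _ => hsamp s) (fun _ _ => zero_le_one)
    (fun s => by simp) htrivcost
  have hLHSne : {v : ℝ | ∃ P ∈ amb lo hi π ξe r, v = ∫ ξ, Qt ξ ∂P}.Nonempty :=
    ⟨∫ ξ, Qt ξ ∂P₀, ⟨P₀, hP₀amb, rfl⟩⟩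
  have hLHSbdd : BddAbove {v : ℝ | ∃ P ∈ amb lo hi π ξe r, v = ∫ ξ, Qt ξ ∂P} := by
    refine ⟨M, fun v hv => ?_⟩
    obtain ⟨P, ⟨hPprob, hPIcc, -⟩, rfl⟩ := hv
    haveI := hPprob
    have haeIcc : ∀ᵐ ξ ∂P, ξ ∈ Set.Icc lo hi := by
      rw [ae_iff]
      have hset : {ξ : Fin m → ℝ | ¬ ξ ∈ Set.Icc lo hi} = (Set.Icc lo hi)ᶜ := rfl
      rw [hset, measure_compl measurableSet_Icc (measure_ne_top P _), measure_univ, hPIcc,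
        tsub_self]
    have hint : Integrable Qt P := by
      refine Integrable.mono' (integrable_const M) hQ.aestronglyMeasurable ?_
      filter_upwards [haeIcc] with ξ hξ
      rw [Real.norm_eq_abs]
      exact hM _ hξ
    calc ∫ ξ, Qt ξ ∂P ≤ ∫ _, M ∂P := by
          refine integral_mono_ae hint (integrable_const M) ?_
          filter_upwards [haeIcc] with ξ hξ
          exact le_trans (le_abs_self _) (hM _ hξ)
      _ = M := by simp [measure_univ]
  refine le_antisymm (csSup_le hLHSne ?_) (csSup_le hRHSne ?_)
  · rintro v ⟨P, hPam, rfl⟩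
    rcases eq_or_lt_of_le hr with h0 | hrpos
    · subst h0
      have hval := zero_case hπ hQ hPam
      refine le_csSup hRHSbdd ?_
      rw [hval]
      refine ⟨fun _ => 1, fun _ => Nat.one_pos, fun s _ => ξe s, fun _ _ => 1,
        fun s _ => hsamp s, fun _ _ => zero_le_one, fun s => by simp, htrivcost, ?_⟩
      simp
    · refine le_of_forall_pos_le_add fun ε hε => ?_
      obtain ⟨N, hN, ξd, πd, hmem, hnn, h1, hc, hval⟩ :=
        hard_dir hbox hsamp hπ hπ1 hQ hrpos hPam hε
      have hle : (∑ s, ∑ n, π s * πd s n * Qt (ξd s n)) ≤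
          sSup {v : ℝ | ∃ (N : Fin S → ℕ) (_ : ∀ s, 0 < N s)
            (ξd : (s : Fin S) → Fin (N s) → Fin m → ℝ)
            (πd : (s : Fin S) → Fin (N s) → ℝ),
            (∀ s n, ξd s n ∈ Set.Icc lo hi) ∧ (∀ s n, 0 ≤ πd s n) ∧
            (∀ s, ∑ n, πd s n = 1) ∧
            (∑ s, ∑ n, π s * πd s n * (∑ i, |ξd s n i - ξe s i|) ≤ r) ∧
            v = ∑ s, ∑ n, π s * πd s n * Qt (ξd s n)} :=
        le_csSup hRHSbdd ⟨N, hN, ξd, πd, hmem, hnn, h1, hc, rfl⟩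
      linarith
  · rintro w ⟨N, hN, ξd, πd, hmem, hnn, h1, hc, rfl⟩
    obtain ⟨P, hPamb, hPv⟩ := easy_dir lo hi ξe π hπ hπ1 Qt hQ r ξd πd hmem hnn h1 hc
    rw [hPv]
    exact le_csSup hLHSbdd ⟨P, hPamb, rfl⟩
end
end

section
/- (Proposition 2) The pricing subproblem admits an optimal scenario on the three-valued grid: let x̂ ∈ ℝ^n, α̂ ∈ ℝ, β̂ ≥ 0, π ≥ 0, and ξ^e ∈ Ξ. Let Λ = {λ ∈ ℝ^p : λ ≥ 0, d + F⊤λ ≥ 0} and assume that for every ξ ∈ Ξ the recourse value Q(x̂,ξ) is finite and equals sup_{λ ∈ Λ} ⟨G x̂ + K ξ − h, λ⟩ (linear programming strong duality). Define f(ξ) = π ( Q(x̂,ξ) − β̂ ‖ξ − ξ^e‖₁ ) − α̂. Then sup_{ξ ∈ Ξ} f(ξ) = max_{ξ ∈ G} f(ξ); in particular there exists an optimal solution ξ̂ of the pricing subproblem max_{ξ ∈ Ξ} f(ξ) with ξ̂_i ∈ {ξ̲_i, ξ^e_i, ξ̄_i} for every i ∈ {1,…,m}. -/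
open Set

private lemma qv_convex_aux {n m p q : ℕ} (lo hi : Fin m → ℝ)
    (F : Fin p → Fin q → ℝ) (G : Fin p → Fin n → ℝ) (K : Fin p → Fin m → ℝ)
    (d : Fin q → ℝ) (h : Fin p → ℝ) (xhat : Fin n → ℝ)
    (Qv : (Fin m → ℝ) → ℝ)
    (hdual : ∀ ξ ∈ Set.Icc lo hi,
      IsLUB {v : ℝ | ∃ lam : Fin p → ℝ, (∀ i, 0 ≤ lam i) ∧
        (∀ j, 0 ≤ d j + ∑ i, F i j * lam i) ∧
        v = ∑ i, (∑ j, G i j * xhat j + ∑ i', K i i' * ξ i' - h i) * lam i} (Qv ξ))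
    (c : ℝ) (hc0 : 0 ≤ c) (hc1 : c ≤ 1)
    (a b : Fin m → ℝ) (ha : a ∈ Set.Icc lo hi) (hb : b ∈ Set.Icc lo hi)
    (hab : (fun i => c * a i + (1 - c) * b i) ∈ Set.Icc lo hi) :
    Qv (fun i => c * a i + (1 - c) * b i) ≤ c * Qv a + (1 - c) * Qv b := by
  refine (hdual _ hab).2 ?_
  rintro v ⟨lam, hlam, hfeas, rfl⟩
  have hva : ∑ i, (∑ j, G i j * xhat j + ∑ i', K i i' * a i' - h i) * lam i ≤ Qv a :=
    (hdual a ha).1 ⟨lam, hlam, hfeas, rfl⟩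
  have hvb : ∑ i, (∑ j, G i j * xhat j + ∑ i', K i i' * b i' - h i) * lam i ≤ Qv b :=
    (hdual b hb).1 ⟨lam, hlam, hfeas, rfl⟩
  have hsplit :
      ∑ i, (∑ j, G i j * xhat j + ∑ i', K i i' * (c * a i' + (1 - c) * b i') - h i) * lam i
      = c * ∑ i, (∑ j, G i j * xhat j + ∑ i', K i i' * a i' - h i) * lam i
      + (1 - c) * ∑ i, (∑ j, G i j * xhat j + ∑ i', K i i' * b i' - h i) * lam i := by
    rw [Finset.mul_sum, Finset.mul_sum, ← Finset.sum_add_distrib]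
    refine Finset.sum_congr rfl fun i _ => ?_
    have hK : ∑ i', K i i' * (c * a i' + (1 - c) * b i')
        = c * ∑ i', K i i' * a i' + (1 - c) * ∑ i', K i i' * b i' := by
      rw [Finset.mul_sum, Finset.mul_sum, ← Finset.sum_add_distrib]
      exact Finset.sum_congr rfl fun i' _ => by ring
    rw [hK]; ring
  have h1 := mul_le_mul_of_nonneg_left hva hc0
  have h2 := mul_le_mul_of_nonneg_left hvb (by linarith : (0:ℝ) ≤ 1 - c)
  calc ∑ i, (∑ j, G i j * xhat j + ∑ i', K i i' *
        ((fun i => c * a i + (1 - c) * b i) i') - h i) * lam i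
      = c * ∑ i, (∑ j, G i j * xhat j + ∑ i', K i i' * a i' - h i) * lam i
      + (1 - c) * ∑ i, (∑ j, G i j * xhat j + ∑ i', K i i' * b i' - h i) * lam i := hsplit
    _ ≤ c * Qv a + (1 - c) * Qv b := by linarith

/-- (Proposition 2) The pricing subproblem admits an optimal scenario on the three-valued
grid: assuming linear-programming strong duality holds for the recourse problem at every
`ξ ∈ Ξ` (the recourse value `Qv ξ` is finite, equals the primal infimum and the dual
supremum), the function `f(ξ) = π (Qv ξ − β̂ ‖ξ − ξ^e‖₁) − α̂` attains its supremum over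
the box `Ξ` at a point whose every coordinate lies in `{ξ̲ᵢ, ξ^eᵢ, ξ̄ᵢ}`. -/
theorem stmt10 {n m p q : ℕ} (lo hi : Fin m → ℝ) (hbox : ∀ i, lo i ≤ hi i)
    (F : Fin p → Fin q → ℝ) (G : Fin p → Fin n → ℝ) (K : Fin p → Fin m → ℝ)
    (d : Fin q → ℝ) (h : Fin p → ℝ)
    (xhat : Fin n → ℝ) (αhat βhat πs : ℝ) (hβ : 0 ≤ βhat) (hπ : 0 ≤ πs)
    (ξev : Fin m → ℝ) (hξe : ξev ∈ Set.Icc lo hi)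
    (Qv : (Fin m → ℝ) → ℝ)
    (hprimal : ∀ ξ ∈ Set.Icc lo hi,
      IsGLB {v : ℝ | ∃ y : Fin q → ℝ, (∀ j, 0 ≤ y j) ∧
        (∀ i, ∑ j, F i j * y j ≤ h i - ∑ j, G i j * xhat j - ∑ i', K i i' * ξ i') ∧
        v = ∑ j, d j * y j} (Qv ξ))
    (hdual : ∀ ξ ∈ Set.Icc lo hi,
      IsLUB {v : ℝ | ∃ lam : Fin p → ℝ, (∀ i, 0 ≤ lam i) ∧
        (∀ j, 0 ≤ d j + ∑ i, F i j * lam i) ∧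
        v = ∑ i, (∑ j, G i j * xhat j + ∑ i', K i i' * ξ i' - h i) * lam i} (Qv ξ)) :
    ∃ ξhat ∈ Set.Icc lo hi,
      (∀ i, ξhat i = lo i ∨ ξhat i = ξev i ∨ ξhat i = hi i) ∧
      ∀ ξ ∈ Set.Icc lo hi,
        πs * (Qv ξ - βhat * ∑ i, |ξ i - ξev i|) - αhat ≤
          πs * (Qv ξhat - βhat * ∑ i, |ξhat i - ξev i|) - αhat := by
  classical
  set f : (Fin m → ℝ) → ℝ :=
    fun ζ => πs * (Qv ζ - βhat * ∑ i, |ζ i - ξev i|) - αhat with hf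
  -- updating a coordinate within bounds stays in the box
  have hupd : ∀ ξ ∈ Set.Icc lo hi, ∀ (i : Fin m) (t : ℝ), lo i ≤ t → t ≤ hi i →
      Function.update ξ i t ∈ Set.Icc lo hi := by
    intro ξ hξ i t h1 h2
    refine ⟨fun j => ?_, fun j => ?_⟩
    · rcases eq_or_ne j i with rfl | hj
      · simpa using h1
      · simpa [Function.update_of_ne hj] using hξ.1 j
    · rcases eq_or_ne j i with rfl | hj
      · simpa using h2
      · simpa [Function.update_of_ne hj] using hξ.2 j
  -- segment lemma : if |· - ξev i| is affine on [a,b] ∋ ξ i, f at ξ is dominated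
  -- by f at one of the endpoints (moved in coordinate i)
  have seg : ∀ ξ ∈ Set.Icc lo hi, ∀ (i : Fin m) (a b u v : ℝ),
      lo i ≤ a → b ≤ hi i → a ≤ ξ i → ξ i ≤ b →
      (∀ s, a ≤ s → s ≤ b → |s - ξev i| = u * s + v) →
      f ξ ≤ max (f (Function.update ξ i a)) (f (Function.update ξ i b)) := by
    intro ξ hξ i a b u v hla hbh hax hxb habs
    rcases eq_or_lt_of_le (hax.trans hxb) with heq | hlt
    · -- a = b, hence ξ i = a and update ξ i a = ξ
      have hxa : ξ i = a := le_antisymm (heq ▸ hxb) hax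
      have : Function.update ξ i a = ξ := by
        rw [← hxa]; exact Function.update_eq_self i ξ
      rw [this]; exact le_max_left _ _
    · set c : ℝ := (b - ξ i) / (b - a) with hc
      have hba : b - a ≠ 0 := by linarith
      have hc0 : 0 ≤ c := div_nonneg (by linarith) (by linarith)
      have hc1 : c ≤ 1 := by
        rw [hc, div_le_one (by linarith : (0:ℝ) < b - a)]; linarith
      have hcc : c * a + (1 - c) * b = ξ i := by
        have h1 : c * (b - a) = b - ξ i := div_mul_cancel₀ _ hba
        nlinarith [h1]
      set A := Function.update ξ i a with hA
      set B := Function.update ξ i b with hB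
      have hAm : A ∈ Set.Icc lo hi := hupd ξ hξ i a hla (by linarith)
      have hBm : B ∈ Set.Icc lo hi := hupd ξ hξ i b (by linarith) hbh
      have hcomb : (fun j => c * A j + (1 - c) * B j) = ξ := by
        funext j
        rcases eq_or_ne j i with rfl | hj
        · simp only [hA, hB, Function.update_self]; linarith [hcc]
        · simp only [hA, hB, Function.update_of_ne hj]; ring
      have hQ : Qv ξ ≤ c * Qv A + (1 - c) * Qv B := by
        have := qv_convex_aux lo hi F G K d h xhat Qv hdual c hc0 hc1 A B hAm hBm
          (hcomb ▸ hξ)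
        rwa [hcomb] at this
      have hP : ∑ j, |ξ j - ξev j|
          = c * ∑ j, |A j - ξev j| + (1 - c) * ∑ j, |B j - ξev j| := by
        rw [Finset.mul_sum, Finset.mul_sum, ← Finset.sum_add_distrib]
        refine Finset.sum_congr rfl fun j _ => ?_
        rcases eq_or_ne j i with rfl | hj
        · have e1 : |ξ j - ξev j| = u * ξ j + v := habs _ hax hxb
          have e2 : |A j - ξev j| = u * a + v := by
            rw [hA, Function.update_self]; exact habs a le_rfl (by linarith)
          have e3 : |B j - ξev j| = u * b + v := by
            rw [hB, Function.update_self]; exact habs b (by linarith) le_rfl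
          rw [e1, e2, e3]
          have : c * (u * a + v) + (1 - c) * (u * b + v)
              = u * (c * a + (1 - c) * b) + v := by ring
          rw [this, hcc]
        · simp only [hA, hB, Function.update_of_ne hj]; ring
      have hfle : f ξ ≤ c * f A + (1 - c) * f B := by
        have e1 : c * f A + (1 - c) * f B
            = πs * (c * Qv A + (1 - c) * Qv B)
            - πs * βhat * (c * ∑ j, |A j - ξev j| + (1 - c) * ∑ j, |B j - ξev j|)
            - αhat := by simp only [hf]; ring
        have e2 : f ξ = πs * Qv ξ - πs * βhat * ∑ j, |ξ j - ξev j| - αhat := by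
          simp only [hf]; ring
        rw [e1, ← hP, e2]
        have := mul_le_mul_of_nonneg_left hQ hπ
        linarith
      have hmax : c * f A + (1 - c) * f B ≤ max (f A) (f B) := by
        have h1 := mul_le_mul_of_nonneg_left (le_max_left (f A) (f B)) hc0
        have h2 := mul_le_mul_of_nonneg_left (le_max_right (f A) (f B))
          (by linarith : (0:ℝ) ≤ 1 - c)
        nlinarith
      exact hfle.trans hmax
  -- per-coordinate improvement to the grid
  have coord : ∀ ξ ∈ Set.Icc lo hi, ∀ i : Fin m,
      ∃ t, (t = lo i ∨ t = ξev i ∨ t = hi i) ∧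
        Function.update ξ i t ∈ Set.Icc lo hi ∧ f ξ ≤ f (Function.update ξ i t) := by
    intro ξ hξ i
    rcases le_total (ξ i) (ξev i) with hle | hle
    · have hm := seg ξ hξ i (lo i) (ξev i) (-1) (ξev i) le_rfl (hξe.2 i) (hξ.1 i) hle
        (fun s _ hs2 => by rw [abs_of_nonpos (by linarith)]; ring)
      rcases le_max_iff.1 hm with h' | h'
      · exact ⟨lo i, Or.inl rfl, hupd ξ hξ i (lo i) le_rfl (hbox i), h'⟩
      · exact ⟨ξev i, Or.inr (Or.inl rfl), hupd ξ hξ i (ξev i) (hξe.1 i) (hξe.2 i), h'⟩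
    · have hm := seg ξ hξ i (ξev i) (hi i) 1 (-(ξev i)) (hξe.1 i) le_rfl hle (hξ.2 i)
        (fun s hs1 _ => by rw [abs_of_nonneg (by linarith)]; ring)
      rcases le_max_iff.1 hm with h' | h'
      · exact ⟨ξev i, Or.inr (Or.inl rfl), hupd ξ hξ i (ξev i) (hξe.1 i) (hξe.2 i), h'⟩
      · exact ⟨hi i, Or.inr (Or.inr rfl), hupd ξ hξ i (hi i) (hbox i) le_rfl, h'⟩
  -- iterate over coordinates
  have step : ∀ k : ℕ, ∀ ξ ∈ Set.Icc lo hi, ∃ ξ' ∈ Set.Icc lo hi,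
      (∀ i : Fin m, (i : ℕ) < k → (ξ' i = lo i ∨ ξ' i = ξev i ∨ ξ' i = hi i)) ∧
      f ξ ≤ f ξ' := by
    intro k
    induction k with
    | zero => exact fun ξ hξ => ⟨ξ, hξ, fun i hi => absurd hi (by omega), le_rfl⟩
    | succ k ih =>
      intro ξ hξ
      obtain ⟨ξ', hξ', hgrid, hle⟩ := ih ξ hξ
      by_cases hk : k < m
      · obtain ⟨t, ht, hmem, hle'⟩ := coord ξ' hξ' ⟨k, hk⟩
        refine ⟨Function.update ξ' ⟨k, hk⟩ t, hmem, ?_, hle.trans hle'⟩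
        intro i hi
        rcases eq_or_ne i ⟨k, hk⟩ with rfl | hne
        · simpa using ht
        · rw [Function.update_of_ne hne]
          have hik : (i : ℕ) ≠ k := fun hh => hne (Fin.ext hh)
          exact hgrid i (by omega)
      · exact ⟨ξ', hξ', fun i hi => hgrid i (by have := i.isLt; omega), hle⟩
  -- the grid is a finite set containing ξev
  set S : Set (Fin m → ℝ) :=
    {g | ∀ i, g i = lo i ∨ g i = ξev i ∨ g i = hi i} with hS
  have hSfin : S.Finite := by
    have hSeq : S = Set.pi Set.univ (fun i => ({lo i, ξev i, hi i} : Set ℝ)) := by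
      ext g
      simp [hS, Set.mem_pi, Set.mem_insert_iff, Set.mem_singleton_iff]
    rw [hSeq]
    exact Set.Finite.pi fun i =>
      (Set.finite_singleton (hi i)).insert (ξev i) |>.insert (lo i)
  have hSsub : S ⊆ Set.Icc lo hi := by
    intro g hg
    have hg' : ∀ i, g i = lo i ∨ g i = ξev i ∨ g i = hi i := hg
    rw [Set.mem_Icc]
    constructor
    · intro i
      rcases hg' i with h' | h' | h'
      · rw [h']
      · rw [h']; exact hξe.1 i
      · rw [h']; exact hbox i
    · intro i
      rcases hg' i with h' | h' | h'
      · rw [h']; exact hbox i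
      · rw [h']; exact hξe.2 i
      · rw [h']
  have hSne : (hSfin.toFinset).Nonempty := by
    refine ⟨ξev, ?_⟩
    rw [hSfin.mem_toFinset]
    exact fun i => Or.inr (Or.inl rfl)
  obtain ⟨ξhat, hξhatmem, hmax⟩ := hSfin.toFinset.exists_max_image f hSne
  rw [hSfin.mem_toFinset] at hξhatmem
  refine ⟨ξhat, hSsub hξhatmem, hξhatmem, ?_⟩
  intro ξ hξ
  obtain ⟨ξ', hξ'Icc, hgrid, hle⟩ := step m ξ hξ
  have hξ'S : ξ' ∈ S := fun i => hgrid i i.isLt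
  have h2 : f ξ' ≤ f ξhat := hmax ξ' (hSfin.mem_toFinset.2 hξ'S)
  exact (hle.trans h2 : f ξ ≤ f ξhat)
end

section
/- Enumeration of extreme points of the two-dimensional linearized polyhedron: let a < e < b be reals and S = {(t,z) ∈ ℝ² : a ≤ t ≤ b, z ≥ t − e, z ≥ e − t}. Then the set of extreme points of S (points of S that do not lie in the open segment between two distinct points of S) is exactly {(a, e − a), (e, 0), (b, b − e)}. -/
private lemma comb_le {θ₁ θ₂ u v c : ℝ} (h1 : 0 < θ₁) (h2 : 0 < θ₂) (hs : θ₁ + θ₂ = 1)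
    (hu : c ≤ u) (hv : c ≤ v) (he : θ₁ * u + θ₂ * v = c) : u = c ∧ v = c := by
  have key : θ₁ * (u - c) + θ₂ * (v - c) = 0 := by linear_combination he - c * hs
  have hu0 : θ₁ * (u - c) = 0 :=
    le_antisymm (by nlinarith [mul_nonneg h2.le (sub_nonneg.2 hv)])
      (mul_nonneg h1.le (sub_nonneg.2 hu))
  have hv0 : θ₂ * (v - c) = 0 :=
    le_antisymm (by nlinarith [mul_nonneg h1.le (sub_nonneg.2 hu)])
      (mul_nonneg h2.le (sub_nonneg.2 hv))
  constructor
  · rcases mul_eq_zero.1 hu0 with h | h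
    · exact absurd h h1.ne'
    · linarith
  · rcases mul_eq_zero.1 hv0 with h | h
    · exact absurd h h2.ne'
    · linarith

private lemma comb_ge {θ₁ θ₂ u v c : ℝ} (h1 : 0 < θ₁) (h2 : 0 < θ₂) (hs : θ₁ + θ₂ = 1)
    (hu : u ≤ c) (hv : v ≤ c) (he : θ₁ * u + θ₂ * v = c) : u = c ∧ v = c := by
  have h := comb_le (u := -u) (v := -v) (c := -c) h1 h2 hs (by linarith) (by linarith)
    (by linear_combination -he)
  constructor <;> linarith [h.1, h.2]

private lemma mid_mem (x d : ℝ × ℝ) : x ∈ openSegment ℝ (x + d) (x - d) := by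
  refine ⟨1/2, 1/2, by norm_num, by norm_num, by norm_num, ?_⟩
  module

/-- Enumeration of extreme points of the two-dimensional linearized polyhedron:
for `a < e < b`, the extreme points of
`S = {(t,z) : a ≤ t ≤ b, z ≥ t − e, z ≥ e − t}` are exactly
`{(a, e − a), (e, 0), (b, b − e)}`. -/
theorem stmt12 (a e b : ℝ) (hae : a < e) (heb : e < b) :
    Set.extremePoints ℝ
        {p : ℝ × ℝ | a ≤ p.1 ∧ p.1 ≤ b ∧ p.1 - e ≤ p.2 ∧ e - p.1 ≤ p.2} =
      {(a, e - a), (e, 0), (b, b - e)} := by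
  set S : Set (ℝ × ℝ) := {p : ℝ × ℝ | a ≤ p.1 ∧ p.1 ≤ b ∧ p.1 - e ≤ p.2 ∧ e - p.1 ≤ p.2}
    with hSdef
  ext ⟨t, z⟩
  simp only [mem_extremePoints, Set.mem_insert_iff, Set.mem_singleton_iff]
  constructor
  · rintro ⟨⟨hta, htb, h1, h2⟩, hext⟩
    dsimp only at hta htb h1 h2
    by_contra hne
    push_neg at hne
    obtain ⟨hne1, hne2, hne3⟩ := hne
    by_cases hstrict : t - e < z ∧ e - t < z
    · set ε := min (z - (t - e)) (z - (e - t)) with hε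
      have hεpos : 0 < ε := lt_min (by linarith [hstrict.1]) (by linarith [hstrict.2])
      have hε1 : ε ≤ z - (t - e) := min_le_left _ _
      have hε2 : ε ≤ z - (e - t) := min_le_right _ _
      have hmem1 : ((t, z) : ℝ × ℝ) + (0, ε) ∈ S := by
        refine ⟨?_, ?_, ?_, ?_⟩ <;> simp <;> linarith
      have hmem2 : ((t, z) : ℝ × ℝ) - (0, ε) ∈ S := by
        refine ⟨?_, ?_, ?_, ?_⟩ <;> simp <;> linarith
      have h := (hext _ hmem1 _ hmem2 (mid_mem _ _)).1
      rw [Prod.ext_iff] at h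
      simp only [Prod.fst_add, Prod.snd_add] at h
      obtain ⟨-, h2'⟩ := h
      linarith [h2']
    · push_neg at hstrict
      rcases lt_trichotomy t e with hte | hte | hte
      · have hz : z = e - t := by
          rcases lt_or_ge (t - e) z with h | h
          · linarith [hstrict h]
          · linarith
        have hta' : a < t := by
          rcases lt_or_eq_of_le hta with h | h
          · exact h
          · exact absurd (Prod.ext_iff.2 ⟨h.symm, by dsimp only; rw [hz, h]⟩) hne1
        set ε := min (t - a) (e - t) with hε
        have hεpos : 0 < ε := lt_min (by linarith) (by linarith)
        have hε1 : ε ≤ t - a := min_le_left _ _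
        have hε2 : ε ≤ e - t := min_le_right _ _
        have hmem1 : ((t, z) : ℝ × ℝ) + (-ε, ε) ∈ S := by
          refine ⟨?_, ?_, ?_, ?_⟩ <;> simp <;> linarith
        have hmem2 : ((t, z) : ℝ × ℝ) - (-ε, ε) ∈ S := by
          refine ⟨?_, ?_, ?_, ?_⟩ <;> simp <;> linarith
        have h := (hext _ hmem1 _ hmem2 (mid_mem _ _)).1
        rw [Prod.ext_iff] at h
        simp only [Prod.fst_add, Prod.snd_add] at h
        obtain ⟨-, h2'⟩ := h
        linarith [h2']
      · subst hte
        have hz : z ≠ 0 := fun h => hne2 (Prod.ext_iff.2 ⟨rfl, h⟩)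
        have hzpos : 0 < z := lt_of_le_of_ne (by linarith) (Ne.symm hz)
        have := hstrict (by linarith)
        linarith
      · have hz : z = t - e := by
          rcases lt_or_ge (e - t) z with h | h
          · rcases lt_or_ge (t - e) z with h' | h'
            · linarith [hstrict h']
            · linarith
          · linarith
        have htb' : t < b := by
          rcases lt_or_eq_of_le htb with h | h
          · exact h
          · exact absurd (Prod.ext_iff.2 ⟨h, by dsimp only; rw [hz, h]⟩) hne3
        set ε := min (t - e) (b - t) with hε
        have hεpos : 0 < ε := lt_min (by linarith) (by linarith)
        have hε1 : ε ≤ t - e := min_le_left _ _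
        have hε2 : ε ≤ b - t := min_le_right _ _
        have hmem1 : ((t, z) : ℝ × ℝ) + (ε, ε) ∈ S := by
          refine ⟨?_, ?_, ?_, ?_⟩ <;> simp <;> linarith
        have hmem2 : ((t, z) : ℝ × ℝ) - (ε, ε) ∈ S := by
          refine ⟨?_, ?_, ?_, ?_⟩ <;> simp <;> linarith
        have h := (hext _ hmem1 _ hmem2 (mid_mem _ _)).1
        rw [Prod.ext_iff] at h
        simp only [Prod.fst_add, Prod.snd_add] at h
        obtain ⟨h1', -⟩ := h
        linarith [h1']
  · rintro (h | h | h) <;> rw [h]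
    · refine ⟨⟨?_, ?_, ?_, ?_⟩, ?_⟩ <;> try (dsimp only; linarith)
      rintro ⟨t₁, z₁⟩ ⟨ha₁, hb₁, hc₁, hd₁⟩ ⟨t₂, z₂⟩ ⟨ha₂, hb₂, hc₂, hd₂⟩
        ⟨θ₁, θ₂, hθ₁, hθ₂, hsum, heq⟩
      dsimp only at ha₁ hb₁ hc₁ hd₁ ha₂ hb₂ hc₂ hd₂
      rw [Prod.ext_iff] at heq
      simp only [Prod.fst_add, Prod.snd_add, Prod.smul_fst, Prod.smul_snd, smul_eq_mul] at heq
      obtain ⟨he1, he2⟩ := heq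
      obtain ⟨ht1, ht2⟩ := comb_le hθ₁ hθ₂ hsum ha₁ ha₂ he1
      subst ht1; subst ht2
      obtain ⟨hz1, hz2⟩ := comb_le hθ₁ hθ₂ hsum hd₁ hd₂ he2
      exact ⟨Prod.ext_iff.2 ⟨rfl, hz1⟩, Prod.ext_iff.2 ⟨rfl, hz2⟩⟩
    · refine ⟨⟨?_, ?_, ?_, ?_⟩, ?_⟩ <;> try (dsimp only; linarith)
      rintro ⟨t₁, z₁⟩ ⟨ha₁, hb₁, hc₁, hd₁⟩ ⟨t₂, z₂⟩ ⟨ha₂, hb₂, hc₂, hd₂⟩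
        ⟨θ₁, θ₂, hθ₁, hθ₂, hsum, heq⟩
      dsimp only at ha₁ hb₁ hc₁ hd₁ ha₂ hb₂ hc₂ hd₂
      rw [Prod.ext_iff] at heq
      simp only [Prod.fst_add, Prod.snd_add, Prod.smul_fst, Prod.smul_snd, smul_eq_mul] at heq
      obtain ⟨he1, he2⟩ := heq
      have hz1nn : (0:ℝ) ≤ z₁ := by linarith
      have hz2nn : (0:ℝ) ≤ z₂ := by linarith
      obtain ⟨hz1, hz2⟩ := comb_le hθ₁ hθ₂ hsum hz1nn hz2nn he2
      have ht1 : t₁ = e := by rw [hz1] at hc₁ hd₁; linarith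
      have ht2 : t₂ = e := by rw [hz2] at hc₂ hd₂; linarith
      exact ⟨Prod.ext_iff.2 ⟨ht1, hz1⟩, Prod.ext_iff.2 ⟨ht2, hz2⟩⟩
    · refine ⟨⟨?_, ?_, ?_, ?_⟩, ?_⟩ <;> try (dsimp only; linarith)
      rintro ⟨t₁, z₁⟩ ⟨ha₁, hb₁, hc₁, hd₁⟩ ⟨t₂, z₂⟩ ⟨ha₂, hb₂, hc₂, hd₂⟩
        ⟨θ₁, θ₂, hθ₁, hθ₂, hsum, heq⟩
      dsimp only at ha₁ hb₁ hc₁ hd₁ ha₂ hb₂ hc₂ hd₂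
      rw [Prod.ext_iff] at heq
      simp only [Prod.fst_add, Prod.snd_add, Prod.smul_fst, Prod.smul_snd, smul_eq_mul] at heq
      obtain ⟨he1, he2⟩ := heq
      obtain ⟨ht1, ht2⟩ := comb_ge hθ₁ hθ₂ hsum hb₁ hb₂ he1
      subst ht1; subst ht2
      obtain ⟨hz1, hz2⟩ := comb_le hθ₁ hθ₂ hsum hc₁ hc₂ he2
      exact ⟨Prod.ext_iff.2 ⟨rfl, hz1⟩, Prod.ext_iff.2 ⟨rfl, hz2⟩⟩
end

section
/- Enumeration of extreme points of the full linearized polyhedron: assume ξ̲_i < ξ^e_i < ξ̄_i for all i ∈ {1,…,m}, and let Ξ̃ = {(ξ,z) ∈ ℝ^m × ℝ^m : for all i, ξ̲_i ≤ ξ_i ≤ ξ̄_i, z_i ≥ ξ_i − ξ^e_i, z_i ≥ ξ^e_i − ξ_i}. Then the set of extreme points of Ξ̃ is exactly {(ξ,z) : for all i, (ξ_i, z_i) ∈ {(ξ̲_i, ξ^e_i − ξ̲_i), (ξ^e_i, 0), (ξ̄_i, ξ̄_i − ξ^e_i)}}, and this set has cardinality 3^m. -/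
/-- The feasible polyhedron `Ξ̃` of the dualized pricing subproblem, in the variables
`(ξ, z)`, where `z` linearizes the ℓ¹ deviation `|ξ − ξ^e|` componentwise. -/
def linPoly {m : ℕ} (lo hi ξev : Fin m → ℝ) : Set ((Fin m → ℝ) × (Fin m → ℝ)) :=
  {p | ∀ i, lo i ≤ p.1 i ∧ p.1 i ≤ hi i ∧
    p.1 i - ξev i ≤ p.2 i ∧ ξev i - p.1 i ≤ p.2 i}

/-- The candidate set of extreme points: componentwise one of the three pairs
`(ξ̲ᵢ, ξ^eᵢ − ξ̲ᵢ)`, `(ξ^eᵢ, 0)`, `(ξ̄ᵢ, ξ̄ᵢ − ξ^eᵢ)`. -/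
def gridPoly {m : ℕ} (lo hi ξev : Fin m → ℝ) : Set ((Fin m → ℝ) × (Fin m → ℝ)) :=
  {p | ∀ i, (p.1 i, p.2 i) ∈
    ({(lo i, ξev i - lo i), (ξev i, 0), (hi i, hi i - ξev i)} : Set (ℝ × ℝ))}

lemma comb_le_s13 (a b x y c : ℝ) (ha : 0 < a) (hb : 0 < b) (hab : a + b = 1)
    (hx : c ≤ x) (hy : c ≤ y) (h : a * x + b * y = c) : x = c ∧ y = c := by
  have hc : a * c + b * c = c := by rw [← add_mul, hab, one_mul]
  constructor
  · by_contra hne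
    have hx' : c < x := lt_of_le_of_ne hx (Ne.symm hne)
    have := mul_lt_mul_of_pos_left hx' ha
    have := mul_le_mul_of_nonneg_left hy hb.le
    linarith
  · by_contra hne
    have hy' : c < y := lt_of_le_of_ne hy (Ne.symm hne)
    have := mul_lt_mul_of_pos_left hy' hb
    have := mul_le_mul_of_nonneg_left hx ha.le
    linarith

lemma comb_ge_s13 (a b x y c : ℝ) (ha : 0 < a) (hb : 0 < b) (hab : a + b = 1)
    (hx : x ≤ c) (hy : y ≤ c) (h : a * x + b * y = c) : x = c ∧ y = c := by
  have hc : a * c + b * c = c := by rw [← add_mul, hab, one_mul]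
  constructor
  · by_contra hne
    have hx' : x < c := lt_of_le_of_ne hx hne
    have := mul_lt_mul_of_pos_left hx' ha
    have := mul_le_mul_of_nonneg_left hy hb.le
    linarith
  · by_contra hne
    have hy' : y < c := lt_of_le_of_ne hy hne
    have := mul_lt_mul_of_pos_left hy' hb
    have := mul_le_mul_of_nonneg_left hx ha.le
    linarith

/-- 2D: each of the three candidate pairs is pinned by any convex combination. -/
lemma pin2d (lo hi ξev : ℝ) (hle : lo < ξev) (hge : ξev < hi)
    (u v u₁ v₁ u₂ v₂ a b : ℝ) (ha : 0 < a) (hb : 0 < b) (hab : a + b = 1)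
    (h1 : lo ≤ u₁ ∧ u₁ ≤ hi ∧ u₁ - ξev ≤ v₁ ∧ ξev - u₁ ≤ v₁)
    (h2 : lo ≤ u₂ ∧ u₂ ≤ hi ∧ u₂ - ξev ≤ v₂ ∧ ξev - u₂ ≤ v₂)
    (hu : a * u₁ + b * u₂ = u) (hv : a * v₁ + b * v₂ = v)
    (hmem : (u, v) = (lo, ξev - lo) ∨ (u, v) = (ξev, 0) ∨ (u, v) = (hi, hi - ξev)) :
    u₁ = u ∧ v₁ = v ∧ u₂ = u ∧ v₂ = v := by
  obtain ⟨hl1, hh1, hd1, he1⟩ := h1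
  obtain ⟨hl2, hh2, hd2, he2⟩ := h2
  rcases hmem with h | h | h <;>
    (rw [Prod.mk.injEq] at h; obtain ⟨e1, e2⟩ := h)
  · obtain ⟨g1, g2⟩ := comb_le_s13 a b u₁ u₂ lo ha hb hab hl1 hl2 (by rw [hu, e1])
    obtain ⟨f1, f2⟩ := comb_le_s13 a b v₁ v₂ (ξev - lo) ha hb hab
      (by linarith) (by linarith) (by rw [hv, e2])
    exact ⟨by linarith, by linarith, by linarith, by linarith⟩
  · obtain ⟨f1, f2⟩ := comb_le_s13 a b v₁ v₂ 0 ha hb hab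
      (by linarith) (by linarith) (by rw [hv, e2])
    exact ⟨by linarith, by linarith, by linarith, by linarith⟩
  · obtain ⟨g1, g2⟩ := comb_ge_s13 a b u₁ u₂ hi ha hb hab hh1 hh2 (by rw [hu, e1])
    obtain ⟨f1, f2⟩ := comb_le_s13 a b v₁ v₂ (hi - ξev) ha hb hab
      (by linarith) (by linarith) (by rw [hv, e2])
    exact ⟨by linarith, by linarith, by linarith, by linarith⟩

/-- 2D: a feasible point not among the three pairs is a strict midpoint. -/
lemma split2d (lo hi ξev : ℝ) (hle : lo < ξev) (hge : ξev < hi)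
    (u v : ℝ) (hfeas : lo ≤ u ∧ u ≤ hi ∧ u - ξev ≤ v ∧ ξev - u ≤ v)
    (hne : ¬((u, v) = (lo, ξev - lo) ∨ (u, v) = (ξev, 0) ∨ (u, v) = (hi, hi - ξev))) :
    ∃ u₁ v₁ u₂ v₂ : ℝ,
      (lo ≤ u₁ ∧ u₁ ≤ hi ∧ u₁ - ξev ≤ v₁ ∧ ξev - u₁ ≤ v₁) ∧
      (lo ≤ u₂ ∧ u₂ ≤ hi ∧ u₂ - ξev ≤ v₂ ∧ ξev - u₂ ≤ v₂) ∧
      u₁ + u₂ = 2 * u ∧ v₁ + v₂ = 2 * v ∧ (u₁ ≠ u ∨ v₁ ≠ v) := by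
  push_neg at hne
  obtain ⟨hn1, hn2, hn3⟩ := hne
  obtain ⟨hl, hh, hd, he⟩ := hfeas
  rcases lt_or_ge (max (u - ξev) (ξev - u)) v with hM | hM
  · set ε := v - max (u - ξev) (ξev - u) with hε
    refine ⟨u, v + ε, u, v - ε, ⟨hl, hh, ?_, ?_⟩, ⟨hl, hh, ?_, ?_⟩, by ring, by ring, Or.inr ?_⟩
    · linarith
    · linarith
    · have := le_max_left (u - ξev) (ξev - u); linarith
    · have := le_max_right (u - ξev) (ξev - u); linarith
    · intro h; have : ε = 0 := by linarith
      linarith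
  · have hMv : v = max (u - ξev) (ξev - u) := le_antisymm hM (max_le hd he)
    rcases lt_trichotomy u ξev with hu | hu | hu
    · have hveq : v = ξev - u := by rw [hMv, max_eq_right]; linarith
      have hul : lo < u := by
        rcases lt_or_eq_of_le hl with h | h
        · exact h
        · exfalso; exact hn1 (by rw [← h, hveq, h])
      set ε := min (u - lo) (ξev - u) with hε
      have hε1 : ε ≤ u - lo := min_le_left _ _
      have hε2 : ε ≤ ξev - u := min_le_right _ _
      have hεpos : 0 < ε := lt_min (by linarith) (by linarith)
      refine ⟨u + ε, v - ε, u - ε, v + ε, ⟨by linarith, by linarith, by linarith, by linarith⟩,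
        ⟨by linarith, by linarith, by linarith, by linarith⟩, by ring, by ring,
        Or.inl (by intro h; linarith)⟩
    · exfalso; apply hn2
      have hv0 : v = 0 := by rw [hMv, hu]; simp
      rw [hu, hv0]
    · have hveq : v = u - ξev := by rw [hMv, max_eq_left]; linarith
      have huh : u < hi := by
        rcases lt_or_eq_of_le hh with h | h
        · exact h
        · exfalso; exact hn3 (by rw [h, hveq, h])
      set ε := min (hi - u) (u - ξev) with hε
      have hε1 : ε ≤ hi - u := min_le_left _ _
      have hε2 : ε ≤ u - ξev := min_le_right _ _
      have hεpos : 0 < ε := lt_min (by linarith) (by linarith)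
      refine ⟨u + ε, v + ε, u - ε, v - ε, ⟨by linarith, by linarith, by linarith, by linarith⟩,
        ⟨by linarith, by linarith, by linarith, by linarith⟩, by ring, by ring,
        Or.inl (by intro h; linarith)⟩

/-- Enumeration of extreme points of the full linearized polyhedron: if
`ξ̲ᵢ < ξ^eᵢ < ξ̄ᵢ` for all `i`, the set of extreme points of `Ξ̃` is exactly the
componentwise three-valued grid, which has cardinality `3^m`. -/
theorem stmt13 {m : ℕ} (lo hi ξev : Fin m → ℝ)
    (hstrict : ∀ i, lo i < ξev i ∧ ξev i < hi i) :
    Set.extremePoints ℝ (linPoly lo hi ξev) = gridPoly lo hi ξev ∧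
      (gridPoly lo hi ξev).ncard = 3 ^ m := by
  constructor
  · ext p
    rw [mem_extremePoints]
    constructor
    · rintro ⟨hp, hext⟩ i
      by_contra hne
      simp only [Set.mem_insert_iff, Set.mem_singleton_iff] at hne
      obtain ⟨u₁, v₁, u₂, v₂, hf1, hf2, hsu, hsv, hne'⟩ :=
        split2d (lo i) (hi i) (ξev i) (hstrict i).1 (hstrict i).2 (p.1 i) (p.2 i) (hp i) hne
      set q₁ : (Fin m → ℝ) × (Fin m → ℝ) :=
        (Function.update p.1 i u₁, Function.update p.2 i v₁) with hq₁
      set q₂ : (Fin m → ℝ) × (Fin m → ℝ) :=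
        (Function.update p.1 i u₂, Function.update p.2 i v₂) with hq₂
      have hq1mem : q₁ ∈ linPoly lo hi ξev := by
        intro j
        by_cases hj : j = i
        · subst hj; simpa [hq₁] using hf1
        · simpa [hq₁, Function.update_of_ne hj] using hp j
      have hq2mem : q₂ ∈ linPoly lo hi ξev := by
        intro j
        by_cases hj : j = i
        · subst hj; simpa [hq₂] using hf2
        · simpa [hq₂, Function.update_of_ne hj] using hp j
      have hseg : p ∈ openSegment ℝ q₁ q₂ := by
        rw [openSegment]
        refine ⟨1/2, 1/2, by norm_num, by norm_num, by norm_num, ?_⟩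
        ext j
        · by_cases hj : j = i
          · subst hj; simp [hq₁, hq₂]; linarith
          · simp [hq₁, hq₂, Function.update_of_ne hj]; ring
        · by_cases hj : j = i
          · subst hj; simp [hq₁, hq₂]; linarith
          · simp [hq₁, hq₂, Function.update_of_ne hj]; ring
      obtain ⟨e1, _⟩ := hext q₁ hq1mem q₂ hq2mem hseg
      rcases hne' with h | h
      · exact h (by rw [← e1]; simp [hq₁])
      · exact h (by rw [← e1]; simp [hq₁])
    · intro hg
      have hpmem : p ∈ linPoly lo hi ξev := by
        intro i
        have hs1 := (hstrict i).1
        have hs2 := (hstrict i).2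
        have h3 := hg i
        simp only [Set.mem_insert_iff, Set.mem_singleton_iff] at h3
        rcases h3 with h | h | h <;>
          (rw [Prod.mk.injEq] at h; obtain ⟨h1, h2⟩ := h; rw [h1, h2]) <;>
          exact ⟨by linarith, by linarith, by linarith, by linarith⟩
      refine ⟨hpmem, ?_⟩
      intro q₁ hq1 q₂ hq2 hseg
      rw [openSegment] at hseg
      obtain ⟨a, b, ha, hb, hab, heq⟩ := hseg
      have key : ∀ i, q₁.1 i = p.1 i ∧ q₁.2 i = p.2 i ∧ q₂.1 i = p.1 i ∧ q₂.2 i = p.2 i := by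
        intro i
        have hu : a * q₁.1 i + b * q₂.1 i = p.1 i := by
          have := congrFun (congrArg Prod.fst heq) i; simpa using this
        have hv : a * q₁.2 i + b * q₂.2 i = p.2 i := by
          have := congrFun (congrArg Prod.snd heq) i; simpa using this
        exact pin2d (lo i) (hi i) (ξev i) (hstrict i).1 (hstrict i).2
          (p.1 i) (p.2 i) (q₁.1 i) (q₁.2 i) (q₂.1 i) (q₂.2 i) a b ha hb hab
          (hq1 i) (hq2 i) hu hv (by simpa [Set.mem_insert_iff] using hg i)
      constructor <;> ext j
      · exact (key j).1
      · exact (key j).2.1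
      · exact (key j).2.2.1
      · exact (key j).2.2.2
  · classical
    set f : (Fin m → Fin 3) → (Fin m → ℝ) × (Fin m → ℝ) := fun σ =>
      (fun i => ![lo i, ξev i, hi i] (σ i), fun i => ![ξev i - lo i, 0, hi i - ξev i] (σ i))
      with hf
    have hinj : Function.Injective f := by
      intro σ τ h
      funext i
      have h1 : ![lo i, ξev i, hi i] (σ i) = ![lo i, ξev i, hi i] (τ i) :=
        congrFun (congrArg Prod.fst h) i
      have hσ : σ i = 0 ∨ σ i = 1 ∨ σ i = 2 := by omega
      have hτ : τ i = 0 ∨ τ i = 1 ∨ τ i = 2 := by omega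
      have hs1 := (hstrict i).1
      have hs2 := (hstrict i).2
      rcases hσ with hs | hs | hs <;> rcases hτ with ht | ht | ht <;>
        rw [hs, ht] at h1 ⊢ <;>
        simp only [Matrix.cons_val_zero, Matrix.cons_val_one, Matrix.head_cons,
          Matrix.cons_val_two, Matrix.tail_cons] at h1 <;>
        first | rfl | linarith
    have hrange : gridPoly lo hi ξev = Set.range f := by
      ext p
      constructor
      · intro hg
        refine ⟨fun i => if (p.1 i, p.2 i) = (lo i, ξev i - lo i) then 0
          else if (p.1 i, p.2 i) = (ξev i, 0) then 1 else 2, ?_⟩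
        have hcomp : ∀ i, ![lo i, ξev i, hi i]
            (if (p.1 i, p.2 i) = (lo i, ξev i - lo i) then 0
              else if (p.1 i, p.2 i) = (ξev i, 0) then 1 else 2) = p.1 i ∧
            ![ξev i - lo i, 0, hi i - ξev i]
            (if (p.1 i, p.2 i) = (lo i, ξev i - lo i) then 0
              else if (p.1 i, p.2 i) = (ξev i, 0) then 1 else 2) = p.2 i := by
          intro i
          have hs1 := (hstrict i).1
          have hs2 := (hstrict i).2
          have h3 := hg i
          simp only [Set.mem_insert_iff, Set.mem_singleton_iff] at h3
          rcases h3 with h | h | h <;>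
            (have h' := h
             rw [Prod.mk.injEq] at h'
             obtain ⟨hp1, hp2⟩ := h') <;>
            split_ifs with c1 c2 <;>
            (try rw [Prod.mk.injEq] at c1) <;> (try rw [Prod.mk.injEq] at c2) <;>
            simp only [Matrix.cons_val_zero, Matrix.cons_val_one, Matrix.head_cons,
              Matrix.cons_val_two, Matrix.tail_cons] <;>
            first
              | exact ⟨hp1.symm, hp2.symm⟩
              | (exfalso; push_neg at c1 c2; first
                  | exact (c1 (by linarith)) (by linarith)
                  | exact (c2 (by linarith)) (by linarith)
                  | linarith)
              | (exfalso; push_neg at c1; first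
                  | exact (c1 (by linarith)) (by linarith)
                  | linarith)
              | exact ⟨by linarith, by linarith⟩
        ext i
        · exact (hcomp i).1
        · exact (hcomp i).2
      · rintro ⟨σ, rfl⟩ i
        have hσ : σ i = 0 ∨ σ i = 1 ∨ σ i = 2 := by omega
        rcases hσ with hs | hs | hs <;> rw [hf] <;> simp only [hs] <;> simp
    rw [hrange, ← Nat.card_coe_set_eq, Nat.card_range_of_injective hinj]
    simp
end
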